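/- arXiv:2012.01727 — 8 statements merged into one kernel-verified Lean document; each statement's English description precedes it below -/
import Mathlib

section
/- Let x, y, z : [-L, L] → [0,∞) be absolutely continuous with 0 < x + y + z < ε on [-L,L], satisfying z' ≥ z - σ(x+y), |x'| ≤ σ(x+y+z), and y' ≤ -y + σ(x+z). There is a universal σ₀ > 0 such that if 0 < σ < σ₀, then y(s) + z(s) ≤ 8σ x(s) + 4ε e^{-L/4} for all s ∈ [-L/2, L/2]. -/
open Real Set

lemma expMul_hasDerivAt (c : ℝ) (s : ℝ) {f : ℝ → ℝ} {f' : ℝ} (hf : HasDerivAt f f' s) :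
    HasDerivAt (fun t => f t * Real.exp (-(c*t))) ((f' - c * f s) * Real.exp (-(c*s))) s := by
  have h1 : HasDerivAt (fun t : ℝ => -(c*t)) (-c) s := by
    exact (((hasDerivAt_id s).const_mul c).neg).congr_deriv (by simp)
  have := hf.mul h1.exp
  exact this.congr_deriv (by ring)

lemma gron_mono {a b c : ℝ} {f f' : ℝ → ℝ}
    (hd : ∀ s ∈ Icc a b, HasDerivAt f (f' s) s)
    (hge : ∀ s ∈ Icc a b, c * f s ≤ f' s) :
    MonotoneOn (fun s => f s * Real.exp (-(c*s))) (Icc a b) := by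
  apply monotoneOn_of_deriv_nonneg (convex_Icc a b)
  · exact fun s hs => ((expMul_hasDerivAt c s (hd s hs)).continuousAt).continuousWithinAt
  · intro s hs
    rw [interior_Icc] at hs
    exact (expMul_hasDerivAt c s (hd s (Ioo_subset_Icc_self hs))).differentiableAt.differentiableWithinAt
  · intro s hs
    rw [interior_Icc] at hs
    have hs' := Ioo_subset_Icc_self hs
    rw [(expMul_hasDerivAt c s (hd s hs')).deriv]
    have := hge s hs'
    exact mul_nonneg (by linarith) (Real.exp_pos _).le

lemma gron_anti {a b c : ℝ} {f f' : ℝ → ℝ}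
    (hd : ∀ s ∈ Icc a b, HasDerivAt f (f' s) s)
    (hle : ∀ s ∈ Icc a b, f' s ≤ c * f s) :
    AntitoneOn (fun s => f s * Real.exp (-(c*s))) (Icc a b) := by
  apply antitoneOn_of_deriv_nonpos (convex_Icc a b)
  · exact fun s hs => ((expMul_hasDerivAt c s (hd s hs)).continuousAt).continuousWithinAt
  · intro s hs
    rw [interior_Icc] at hs
    exact (expMul_hasDerivAt c s (hd s (Ioo_subset_Icc_self hs))).differentiableAt.differentiableWithinAt
  · intro s hs
    rw [interior_Icc] at hs
    have hs' := Ioo_subset_Icc_self hs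
    rw [(expMul_hasDerivAt c s (hd s hs')).deriv]
    have := hle s hs'
    exact mul_nonpos_of_nonpos_of_nonneg (by linarith) (Real.exp_pos _).le

set_option maxHeartbeats 1000000 in
/-- Finite-interval Merle–Zaag lemma (`lem:bdd-MZ`): there is a universal `σ₀ > 0` such that
for any nonnegative absolutely continuous `x, y, z` on `[-L, L]` with `0 < x+y+z < ε` and
`z' ≥ z - σ(x+y)`, `|x'| ≤ σ(x+y+z)`, `y' ≤ -y + σ(x+z)`, if `0 < σ < σ₀` then
`y + z ≤ 8σ x + 4ε e^{-L/4}` on `[-L/2, L/2]`. -/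
theorem stmt1 :
    ∃ σ₀ > (0:ℝ), ∀ (L ε σ : ℝ) (x y z x' y' z' : ℝ → ℝ),
      0 < L → 0 < ε →
      (∀ s ∈ Icc (-L) L, 0 ≤ x s ∧ 0 ≤ y s ∧ 0 ≤ z s) →
      (∀ s ∈ Icc (-L) L, 0 < x s + y s + z s ∧ x s + y s + z s < ε) →
      (∀ s ∈ Icc (-L) L,
        HasDerivAt x (x' s) s ∧ HasDerivAt y (y' s) s ∧ HasDerivAt z (z' s) s) →
      (∀ s ∈ Icc (-L) L, z' s ≥ z s - σ * (x s + y s)) →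
      (∀ s ∈ Icc (-L) L, |x' s| ≤ σ * (x s + y s + z s)) →
      (∀ s ∈ Icc (-L) L, y' s ≤ -(y s) + σ * (x s + z s)) →
      0 < σ → σ < σ₀ →
      ∀ s ∈ Icc (-L/2) (L/2), y s + z s ≤ 8 * σ * x s + 4 * ε * Real.exp (-L/4) := by
  refine ⟨1/8, by norm_num, ?_⟩
  intro L ε σ x y z x' y' z' hL hε hnn hsum hderiv hz' hx' hy' hσ hσ8
  intro s₀ hs₀
  obtain ⟨hs₀l, hs₀r⟩ := hs₀
  have hsub : ∀ s, s ∈ Icc (-L/2) (L/2) → s ∈ Icc (-L) L := by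
    intro s hs; exact ⟨by linarith [hs.1], by linarith [hs.2]⟩
  have hs₀m : s₀ ∈ Icc (-L) L := ⟨by linarith, by linarith⟩
  have hLm : L ∈ Icc (-L) L := ⟨by linarith, le_refl L⟩
  have hnLm : -L ∈ Icc (-L) L := ⟨le_refl _, by linarith⟩
  set c : ℝ := 1 - 4*σ^2 with hc
  set E : ℝ := ε * Real.exp (-L/4) with hE
  have hEpos : 0 < E := mul_pos hε (Real.exp_pos _)
  -- bound on z at s₀
  have claimZ : z s₀ ≤ 2*σ*(x s₀ + y s₀) + E := by
    by_cases hcase : z s₀ - 2*σ*(x s₀ + y s₀) ≤ 0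
    · nlinarith
    · push_neg at hcase
      -- g stays nonnegative forward
      have hgd : ∀ s ∈ Icc s₀ L, HasDerivAt (fun t => z t - 2*σ*(x t + y t))
          (z' s - 2*σ*(x' s + y' s)) s := by
        intro s hs
        have hsm : s ∈ Icc (-L) L := ⟨by linarith [hs.1], hs.2⟩
        exact ((hderiv s hsm).2.2).sub
          (((hderiv s hsm).1.add (hderiv s hsm).2.1).const_mul (2*σ))
      have hgge : ∀ s ∈ Icc s₀ L, c * (z s - 2*σ*(x s + y s)) ≤ z' s - 2*σ*(x' s + y' s) := by
        intro s hs
        have hsm : s ∈ Icc (-L) L := ⟨by linarith [hs.1], hs.2⟩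
        have h1 := hz' s hsm
        have h2 := (abs_le.mp (hx' s hsm)).2
        have h3 := (abs_le.mp (hx' s hsm)).1
        have h4 := hy' s hsm
        have h5 := (hnn s hsm).1
        have h6 := (hnn s hsm).2.1
        have h7 := (hnn s hsm).2.2
        nlinarith [mul_nonneg h5 hσ.le, mul_nonneg h6 hσ.le, mul_nonneg h7 hσ.le,
          mul_nonneg (mul_nonneg h5 hσ.le) hσ.le, mul_nonneg (mul_nonneg h6 hσ.le) hσ.le,
          mul_nonneg (mul_nonneg h7 hσ.le) hσ.le]
      have hmono := gron_mono hgd hgge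
      have hgpos : ∀ s ∈ Icc s₀ L, 0 < z s - 2*σ*(x s + y s) := by
        intro s hs
        have hm := hmono (left_mem_Icc.mpr (by linarith [hs.1, hs.2] : s₀ ≤ L)) hs hs.1
        simp only at hm
        have he1 := Real.exp_pos (-(c*s₀))
        have he2 := Real.exp_pos (-(c*s))
        by_contra hcon
        push_neg at hcon
        nlinarith [mul_pos hcase he1, mul_nonpos_of_nonpos_of_nonneg hcon he2.le]
      -- z grows at rate 1/2 forward
      have hzd : ∀ s ∈ Icc s₀ L, HasDerivAt z (z' s) s := by
        intro s hs
        exact (hderiv s ⟨by linarith [hs.1], hs.2⟩).2.2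
      have hzge : ∀ s ∈ Icc s₀ L, (1/2 : ℝ) * z s ≤ z' s := by
        intro s hs
        have h1 := hz' s ⟨by linarith [hs.1], hs.2⟩
        have h2 := hgpos s hs
        have h5 := (hnn s ⟨by linarith [hs.1], hs.2⟩).1
        have h6 := (hnn s ⟨by linarith [hs.1], hs.2⟩).2.1
        nlinarith
      have hzmono := gron_mono hzd hzge
      have hs₀L : s₀ ≤ L := by linarith
      have key := hzmono (left_mem_Icc.mpr hs₀L) (right_mem_Icc.mpr hs₀L) hs₀L
      simp only at key
      -- key : z s₀ * exp (-(1/2 * s₀)) ≤ z L * exp (-(1/2 * L))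
      have hzL : z L ≤ ε := by
        have h1 := (hsum L hLm).2
        have h2 := (hnn L hLm).1
        have h3 := (hnn L hLm).2.1
        linarith
      have hzs₀nn : 0 ≤ z s₀ := (hnn s₀ hs₀m).2.2
      have hfinal : z s₀ ≤ E := by
        have e1 : z s₀ = (z s₀ * Real.exp (-(1/2 * s₀))) * Real.exp (1/2 * s₀) := by
          rw [mul_assoc, ← Real.exp_add]; simp
        have e2 : (z L * Real.exp (-(1/2 * L))) * Real.exp (1/2 * s₀)
            = z L * Real.exp (1/2*s₀ - 1/2*L) := by
          rw [mul_assoc, ← Real.exp_add]; ring_nf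
        have e3 : Real.exp (1/2*s₀ - 1/2*L) ≤ Real.exp (-L/4) :=
          Real.exp_le_exp.mpr (by linarith)
        calc z s₀ = (z s₀ * Real.exp (-(1/2 * s₀))) * Real.exp (1/2 * s₀) := e1
          _ ≤ (z L * Real.exp (-(1/2 * L))) * Real.exp (1/2 * s₀) :=
              mul_le_mul_of_nonneg_right key (Real.exp_pos _).le
          _ = z L * Real.exp (1/2*s₀ - 1/2*L) := e2
          _ ≤ ε * Real.exp (-L/4) := by
              apply mul_le_mul hzL e3 (Real.exp_pos _).le hε.le
      have h5 := (hnn s₀ hs₀m).1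
      have h6 := (hnn s₀ hs₀m).2.1
      nlinarith [mul_nonneg hσ.le (add_nonneg h5 h6)]
  -- bound on y at s₀
  have claimY : y s₀ ≤ 2*σ*(x s₀ + z s₀) + E := by
    by_cases hcase : y s₀ - 2*σ*(x s₀ + z s₀) ≤ 0
    · nlinarith
    · push_neg at hcase
      have hhd : ∀ s ∈ Icc (-L) s₀, HasDerivAt (fun t => y t - 2*σ*(x t + z t))
          (y' s - 2*σ*(x' s + z' s)) s := by
        intro s hs
        have hsm : s ∈ Icc (-L) L := ⟨hs.1, by linarith [hs.2]⟩
        exact ((hderiv s hsm).2.1).sub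
          (((hderiv s hsm).1.add (hderiv s hsm).2.2).const_mul (2*σ))
      have hhle : ∀ s ∈ Icc (-L) s₀, y' s - 2*σ*(x' s + z' s) ≤ (-c) * (y s - 2*σ*(x s + z s)) := by
        intro s hs
        have hsm : s ∈ Icc (-L) L := ⟨hs.1, by linarith [hs.2]⟩
        have h1 := hz' s hsm
        have h2 := (abs_le.mp (hx' s hsm)).2
        have h3 := (abs_le.mp (hx' s hsm)).1
        have h4 := hy' s hsm
        have h5 := (hnn s hsm).1
        have h6 := (hnn s hsm).2.1
        have h7 := (hnn s hsm).2.2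
        nlinarith [mul_nonneg h5 hσ.le, mul_nonneg h6 hσ.le, mul_nonneg h7 hσ.le,
          mul_nonneg (mul_nonneg h5 hσ.le) hσ.le, mul_nonneg (mul_nonneg h6 hσ.le) hσ.le,
          mul_nonneg (mul_nonneg h7 hσ.le) hσ.le]
      have hanti := gron_anti hhd hhle
      have hhpos : ∀ s ∈ Icc (-L) s₀, 0 < y s - 2*σ*(x s + z s) := by
        intro s hs
        have hm := hanti hs (right_mem_Icc.mpr (by linarith [hs.1, hs.2] : -L ≤ s₀)) hs.2
        simp only at hm
        have he1 := Real.exp_pos (-(-c*s₀))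
        have he2 := Real.exp_pos (-(-c*s))
        by_contra hcon
        push_neg at hcon
        nlinarith [mul_pos hcase he1, mul_nonpos_of_nonpos_of_nonneg hcon he2.le]
      have hyd : ∀ s ∈ Icc (-L) s₀, HasDerivAt y (y' s) s := by
        intro s hs
        exact (hderiv s ⟨hs.1, by linarith [hs.2]⟩).2.1
      have hyle : ∀ s ∈ Icc (-L) s₀, y' s ≤ (-(1/2) : ℝ) * y s := by
        intro s hs
        have h4 := hy' s ⟨hs.1, by linarith [hs.2]⟩
        have h2 := hhpos s hs
        have h5 := (hnn s ⟨hs.1, by linarith [hs.2]⟩).1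
        have h7 := (hnn s ⟨hs.1, by linarith [hs.2]⟩).2.2
        nlinarith
      have hyanti := gron_anti hyd hyle
      have hnLs₀ : -L ≤ s₀ := by linarith
      have key := hyanti (left_mem_Icc.mpr hnLs₀) (right_mem_Icc.mpr hnLs₀) hnLs₀
      simp only at key
      -- key : y s₀ * exp (-(-(1/2) * s₀)) ≤ y (-L) * exp (-(-(1/2) * -L))
      have hyL : y (-L) ≤ ε := by
        have h1 := (hsum (-L) hnLm).2
        have h2 := (hnn (-L) hnLm).1
        have h3 := (hnn (-L) hnLm).2.2
        linarith
      have hfinal : y s₀ ≤ E := by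
        have e1 : y s₀ = (y s₀ * Real.exp (-(-(1/2) * s₀))) * Real.exp (-(1/2) * s₀) := by
          rw [mul_assoc, ← Real.exp_add]; simp
        have e2 : (y (-L) * Real.exp (-(-(1/2) * (-L)))) * Real.exp (-(1/2) * s₀)
            = y (-L) * Real.exp (-(1/2)*s₀ - 1/2*L) := by
          rw [mul_assoc, ← Real.exp_add]; ring_nf
        have e3 : Real.exp (-(1/2)*s₀ - 1/2*L) ≤ Real.exp (-L/4) :=
          Real.exp_le_exp.mpr (by linarith)
        calc y s₀ = (y s₀ * Real.exp (-(-(1/2) * s₀))) * Real.exp (-(1/2) * s₀) := e1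
          _ ≤ (y (-L) * Real.exp (-(-(1/2) * (-L)))) * Real.exp (-(1/2) * s₀) :=
              mul_le_mul_of_nonneg_right key (Real.exp_pos _).le
          _ = y (-L) * Real.exp (-(1/2)*s₀ - 1/2*L) := e2
          _ ≤ ε * Real.exp (-L/4) := by
              apply mul_le_mul hyL e3 (Real.exp_pos _).le hε.le
      have h5 := (hnn s₀ hs₀m).1
      have h7 := (hnn s₀ hs₀m).2.2
      nlinarith [mul_nonneg hσ.le (add_nonneg h5 h7)]
  -- combine
  have h5 := (hnn s₀ hs₀m).1
  have h6 := (hnn s₀ hs₀m).2.1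
  have h7 := (hnn s₀ hs₀m).2.2
  have hE4 : 4 * ε * Real.exp (-L/4) = 4 * E := by rw [hE]; ring
  rw [hE4]
  have h18 : (0:ℝ) ≤ 1/8 - σ := by linarith
  nlinarith [mul_le_mul_of_nonneg_left claimZ hσ.le, mul_le_mul_of_nonneg_left claimY hσ.le,
    mul_nonneg h18 (mul_nonneg hσ.le h5), mul_nonneg h18 (mul_nonneg hσ.le h6),
    mul_nonneg h18 (mul_nonneg hσ.le h7), mul_nonneg h18 hEpos.le,
    mul_nonneg hσ.le h5, hEpos.le]
end

section
/- Suppose ρ > 0 and f ≥ 0 are C¹ functions on (-∞,0] with f(τ) → 0 and ρ(τ) → 0 as τ → -∞, satisfying ∂_τ f ≥ λ f + o(ρ) and ∂_τ ρ = o(ρ) for some constant λ > 0 (where o(ρ) denotes a function g with g/ρ → 0 as τ → -∞). Then either there exists δ > 0 with ρ(τ) + f(τ) ≲ e^{δτ} as τ → -∞, or f = o(ρ) as τ → -∞. -/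
open Real Set Filter Topology

/-- ODE lemma (`lem:ode-decay1+`, case λ > 0): if `f' ≥ λ f + o(ρ)` and `ρ' = o(ρ)` with
`f ≥ 0`, `ρ > 0`, both tending to `0` at `-∞`, then either `ρ + f ≲ e^{δτ}` for some `δ > 0`,
or `f = o(ρ)` as `τ → -∞`. -/
theorem stmt2 (f ρ f' ρ' g₁ g₂ : ℝ → ℝ) (lam : ℝ) (hlam : 0 < lam)
    (hρpos : ∀ τ ≤ (0:ℝ), 0 < ρ τ) (hfnn : ∀ τ ≤ (0:ℝ), 0 ≤ f τ)
    (hf : ∀ τ ≤ (0:ℝ), HasDerivAt f (f' τ) τ)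
    (hρ : ∀ τ ≤ (0:ℝ), HasDerivAt ρ (ρ' τ) τ)
    (hf'c : ContinuousOn f' (Iic 0)) (hρ'c : ContinuousOn ρ' (Iic 0))
    (hf0 : Tendsto f atBot (nhds 0)) (hρ0 : Tendsto ρ atBot (nhds 0))
    (hineq : ∀ τ ≤ (0:ℝ), f' τ ≥ lam * f τ + g₁ τ)
    (hg₁ : Tendsto (fun τ => g₁ τ / ρ τ) atBot (nhds 0))
    (hρeq : ∀ τ ≤ (0:ℝ), ρ' τ = g₂ τ)
    (hg₂ : Tendsto (fun τ => g₂ τ / ρ τ) atBot (nhds 0)) :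
    (∃ δ > (0:ℝ), ∃ C > (0:ℝ), ∀ᶠ τ in atBot, ρ τ + f τ ≤ C * Real.exp (δ * τ)) ∨
      Tendsto (fun τ => f τ / ρ τ) atBot (nhds 0) := by
  right
  set h : ℝ → ℝ := fun t => f t / ρ t with hh
  have hne : ∀ τ ≤ (0:ℝ), ρ τ ≠ 0 := fun τ hτ => (hρpos τ hτ).ne'
  have hder : ∀ τ ≤ (0:ℝ), HasDerivAt h
      ((f' τ * ρ τ - f τ * ρ' τ) / (ρ τ) ^ 2) τ := fun τ hτ =>
    (hf τ hτ).div (hρ τ hτ) (hne τ hτ)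
  have hnn : ∀ τ ≤ (0:ℝ), 0 ≤ h τ := fun τ hτ =>
    div_nonneg (hfnn τ hτ) (hρpos τ hτ).le
  rw [Metric.tendsto_nhds]
  intro ε hε
  have hε2 : (0:ℝ) < ε / 2 := by positivity
  -- eventual bounds coming from the o(ρ) hypotheses
  have h2 : ∀ᶠ τ in atBot, |g₂ τ / ρ τ| < lam / 2 := by
    have := Metric.tendsto_nhds.1 hg₂ (lam / 2) (by positivity)
    simp only [Real.dist_eq, sub_zero] at this
    exact this
  have h1 : ∀ᶠ τ in atBot, |g₁ τ / ρ τ| < lam / 4 * (ε / 2) := by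
    have := Metric.tendsto_nhds.1 hg₁ (lam / 4 * (ε / 2)) (by positivity)
    simp only [Real.dist_eq, sub_zero] at this
    exact this
  obtain ⟨T, hT⟩ := eventually_atBot.1 ((h2.and h1).and (eventually_le_atBot (0:ℝ)))
  have hT0 : T ≤ 0 := (hT T le_rfl).2
  set c : ℝ := lam / 8 * (ε / 2) with hc
  have hcpos : 0 < c := by positivity
  set M : ℝ := h T with hM
  -- main claim: h τ₀ ≤ ε/2 for all sufficiently negative τ₀
  have key : ∀ τ₀ ≤ min T (T - (M + 1) / c), h τ₀ ≤ ε / 2 := by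
    intro τ₀ hτ₀
    by_contra hcon
    push_neg at hcon
    have hτ₀T : τ₀ ≤ T := le_trans hτ₀ (min_le_left _ _)
    have hτ₀0 : τ₀ ≤ 0 := hτ₀T.trans hT0
    -- apply the fencing lemma with the linear lower barrier
    set B : ℝ → ℝ := fun x => ε / 2 + c * (x - τ₀) with hB
    have hBd : ∀ x, HasDerivAt B c x := by
      intro x
      have : HasDerivAt (fun x => ε / 2 + c * (x - τ₀)) (c * 1) x :=
        (((hasDerivAt_id x).sub_const τ₀).const_mul c).const_add (ε / 2)
      rw [mul_one] at this; exact this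
    have hcont : ContinuousOn h (Icc τ₀ T) := fun x hx =>
      ((hder x (hx.2.trans hT0)).continuousAt).continuousWithinAt
    have main : ∀ ⦃x⦄, x ∈ Icc τ₀ T → B x ≤ h x := by
      refine image_le_of_deriv_right_lt_deriv_boundary' (f' := fun _ => c)
        (B' := fun x => (f' x * ρ x - f x * ρ' x) / (ρ x) ^ 2)
        (fun x _ => (hBd x).continuousAt.continuousWithinAt)
        (fun x _ => (hBd x).hasDerivWithinAt) ?_ hcont
        (fun x hx => (hder x (hx.2.le.trans hT0)).hasDerivWithinAt) ?_
      · simpa [hB] using hcon.le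
      · intro x hx hbx
        have hx0 : x ≤ 0 := hx.2.le.trans hT0
        have hxT : x ≤ T := hx.2.le
        have hρx := hρpos x hx0
        obtain ⟨⟨hb2, hb1⟩, -⟩ := hT x hxT
        -- rewrite the derivative of h
        have hrw : (f' x * ρ x - f x * ρ' x) / (ρ x) ^ 2
            = f' x / ρ x - h x * (g₂ x / ρ x) := by
          rw [hρeq x hx0, hh]
          field_simp
        have hfd : lam * h x + g₁ x / ρ x ≤ f' x / ρ x := by
          have h5 := hineq x hx0
          have h6 : (lam * f x + g₁ x) / ρ x ≤ f' x / ρ x := by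
            exact div_le_div_of_nonneg_right h5 hρx.le
          calc lam * h x + g₁ x / ρ x = (lam * f x + g₁ x) / ρ x := by
                show lam * (f x / ρ x) + g₁ x / ρ x = _
                field_simp
            _ ≤ f' x / ρ x := h6
        have hhx : ε / 2 ≤ h x := by
          rw [← hbx]
          have : 0 ≤ c * (x - τ₀) := mul_nonneg hcpos.le (by linarith [hx.1])
          show ε / 2 ≤ ε / 2 + c * (x - τ₀)
          linarith
        have hmul : h x * (g₂ x / ρ x) ≤ h x * (lam / 2) :=
          mul_le_mul_of_nonneg_left (le_trans (le_abs_self _) hb2.le) (hnn x hx0)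
        have hg1b : -(lam / 4 * (ε / 2)) ≤ g₁ x / ρ x := by
          have := abs_le.1 hb1.le
          linarith [this.1]
        show c < (f' x * ρ x - f x * ρ' x) / ρ x ^ 2
        rw [hrw]
        have : lam / 2 * h x - lam / 4 * (ε / 2) ≤ f' x / ρ x - h x * (g₂ x / ρ x) := by
          nlinarith
        have h3 : c < lam / 2 * h x - lam / 4 * (ε / 2) := by
          rw [hc]
          nlinarith
        linarith
    have := main ⟨hτ₀T, le_rfl⟩
    have hBT : M + 1 ≤ B T := by
      have h4 : (M + 1) / c ≤ T - τ₀ := by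
        have := le_min_iff.1 hτ₀
        linarith [this.2]
      have : M + 1 ≤ c * (T - τ₀) := by
        rw [div_le_iff₀ hcpos] at h4
        linarith
      show M + 1 ≤ ε / 2 + c * (T - τ₀)
      linarith
    rw [← hM] at this
    linarith
  refine eventually_atBot.2 ⟨min T (T - (M + 1) / c), fun τ hτ => ?_⟩
  have hτ0 : τ ≤ 0 := le_trans (hτ.trans (min_le_left _ _)) hT0
  rw [Real.dist_eq, sub_zero, abs_of_nonneg (hnn τ hτ0)]
  exact lt_of_le_of_lt (key τ hτ) (by linarith)
end

section
/- Suppose ρ > 0 and f ≥ 0 are C¹ functions on (-∞,0] with f(τ) → 0 and ρ(τ) → 0 as τ → -∞, satisfying ∂_τ f ≤ λ f + o(ρ) and ∂_τ ρ = o(ρ) for some constant λ < 0. Then either there exists δ > 0 with ρ(τ) + f(τ) ≲ e^{δτ} as τ → -∞, or f = o(ρ) as τ → -∞. -/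
open Real Set Filter Topology

/-- ODE lemma (`lem:ode-decay1+`, case λ < 0): if `f' ≤ λ f + o(ρ)` and `ρ' = o(ρ)` with
`f ≥ 0`, `ρ > 0`, both tending to `0` at `-∞`, then either `ρ + f ≲ e^{δτ}` for some `δ > 0`,
or `f = o(ρ)` as `τ → -∞`. -/
theorem stmt3 (f ρ f' ρ' g₁ g₂ : ℝ → ℝ) (lam : ℝ) (hlam : lam < 0)
    (hρpos : ∀ τ ≤ (0:ℝ), 0 < ρ τ) (hfnn : ∀ τ ≤ (0:ℝ), 0 ≤ f τ)
    (hf : ∀ τ ≤ (0:ℝ), HasDerivAt f (f' τ) τ)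
    (hρ : ∀ τ ≤ (0:ℝ), HasDerivAt ρ (ρ' τ) τ)
    (hf'c : ContinuousOn f' (Iic 0)) (hρ'c : ContinuousOn ρ' (Iic 0))
    (hf0 : Tendsto f atBot (nhds 0)) (hρ0 : Tendsto ρ atBot (nhds 0))
    (hineq : ∀ τ ≤ (0:ℝ), f' τ ≤ lam * f τ + g₁ τ)
    (hg₁ : Tendsto (fun τ => g₁ τ / ρ τ) atBot (nhds 0))
    (hρeq : ∀ τ ≤ (0:ℝ), ρ' τ = g₂ τ)
    (hg₂ : Tendsto (fun τ => g₂ τ / ρ τ) atBot (nhds 0)) :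
    (∃ δ > (0:ℝ), ∃ C > (0:ℝ), ∀ᶠ τ in atBot, ρ τ + f τ ≤ C * Real.exp (δ * τ)) ∨
      Tendsto (fun τ => f τ / ρ τ) atBot (nhds 0) := by
  right
  rw [NormedAddCommGroup.tendsto_nhds_zero]
  intro ε hε
  set μ : ℝ := -lam / 2 with hμdef
  have hμ : 0 < μ := by simp only [hμdef]; linarith
  set e : ℝ := ε / 2 with hedef
  have he : 0 < e := by positivity
  -- choose T so that the smallness hypotheses hold below T
  have h1 : ∀ᶠ τ in atBot, ‖g₁ τ / ρ τ‖ < e * μ :=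
    (NormedAddCommGroup.tendsto_nhds_zero.mp hg₁) (e * μ) (by positivity)
  have h2 : ∀ᶠ τ in atBot, ‖g₂ τ / ρ τ‖ < μ :=
    (NormedAddCommGroup.tendsto_nhds_zero.mp hg₂) μ hμ
  obtain ⟨T, hT⟩ := ((h1.and h2).and (eventually_le_atBot (0:ℝ))).exists_forall_of_atBot
  -- basic consequences on (-∞, T]
  have hT0 : T ≤ 0 := (hT T le_rfl).2
  have key : ∀ τ ≤ T, g₁ τ ≤ e * μ * ρ τ ∧ -(ρ' τ) ≤ μ * ρ τ := by
    intro τ hτ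
    obtain ⟨⟨hb1, hb2⟩, hτ0⟩ := hT τ hτ
    have hρτ := hρpos τ hτ0
    have e1 : |g₁ τ| ≤ e * μ * ρ τ := by
      have : |g₁ τ / ρ τ| ≤ e * μ := le_of_lt hb1
      rw [abs_div, abs_of_pos hρτ, div_le_iff₀ hρτ] at this
      linarith
    have e2 : |g₂ τ| ≤ μ * ρ τ := by
      have : |g₂ τ / ρ τ| ≤ μ := le_of_lt hb2
      rw [abs_div, abs_of_pos hρτ, div_le_iff₀ hρτ] at this
      linarith
    constructor
    · exact le_trans (le_abs_self _) e1
    · rw [hρeq τ hτ0]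
      exact le_trans (neg_le_abs _) e2
  -- the auxiliary function
  set w : ℝ → ℝ := fun τ => Real.exp (-lam * τ) * (f τ - e * ρ τ) with hwdef
  have hw : ∀ τ ≤ (0:ℝ), HasDerivAt w
      (Real.exp (-lam * τ) * (-lam) * (f τ - e * ρ τ)
        + Real.exp (-lam * τ) * (f' τ - e * ρ' τ)) τ := by
    intro τ hτ
    have hexp : HasDerivAt (fun τ : ℝ => Real.exp (-lam * τ)) (Real.exp (-lam * τ) * (-lam)) τ := by
      have := ((hasDerivAt_id τ).const_mul (-lam)).exp
      simpa [mul_comm] using this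
    have hin : HasDerivAt (fun τ => f τ - e * ρ τ) (f' τ - e * ρ' τ) τ :=
      (hf τ hτ).sub ((hρ τ hτ).const_mul e)
    exact hexp.mul hin
  -- w is antitone on (-∞, T]
  have hanti : AntitoneOn w (Iic T) := by
    refine antitoneOn_of_deriv_nonpos (convex_Iic T) ?_ ?_ ?_
    · intro τ hτ
      exact (hw τ (le_trans hτ hT0)).continuousAt.continuousWithinAt
    · intro τ hτ
      rw [interior_Iic] at hτ
      exact ((hw τ (le_trans (le_of_lt hτ) hT0)).differentiableAt).differentiableWithinAt
    · intro τ hτ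
      rw [interior_Iic] at hτ
      have hτT : τ ≤ T := le_of_lt hτ
      have hτ0 : τ ≤ 0 := le_trans hτT hT0
      rw [(hw τ hτ0).deriv]
      have hexp := Real.exp_pos (-lam * τ)
      obtain ⟨k1, k2⟩ := key τ hτT
      have hρτ := hρpos τ hτ0
      have hfin := hineq τ hτ0
      have hsum : (-lam) * (f τ - e * ρ τ) + (f' τ - e * ρ' τ) ≤ 0 := by
        have h2μ : lam + 2 * μ = 0 := by simp [hμdef]; ring
        nlinarith [mul_pos he hρτ]
      nlinarith
  -- w tends to 0 at -∞
  have hexp0 : Tendsto (fun τ : ℝ => Real.exp (-lam * τ)) atBot (nhds 0) := by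
    apply Real.tendsto_exp_atBot.comp
    exact Tendsto.const_mul_atBot (by linarith : (0:ℝ) < -lam) tendsto_id
  have hw0 : Tendsto w atBot (nhds 0) := by
    have h : Tendsto w atBot (nhds (0 * (0 - e * 0))) := hexp0.mul (hf0.sub (hρ0.const_mul e))
    simpa using h
  -- conclude f ≤ e * ρ on (-∞, T]
  have hfe : ∀ τ ≤ T, f τ ≤ e * ρ τ := by
    intro τ hτ
    have hwτ : w τ ≤ 0 := by
      apply ge_of_tendsto hw0
      rw [eventually_atBot]
      exact ⟨τ, fun σ hσ => hanti (le_trans hσ hτ) hτ hσ⟩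
    have hwτ' : Real.exp (-lam * τ) * (f τ - e * ρ τ) ≤ 0 := hwτ
    have hexp := Real.exp_pos (-lam * τ)
    nlinarith [hwτ', hexp]
  -- finish
  rw [eventually_atBot]
  refine ⟨T, fun τ hτ => ?_⟩
  have hτ0 : τ ≤ 0 := le_trans hτ hT0
  have hρτ := hρpos τ hτ0
  have hdiv : f τ / ρ τ ≤ e := by
    rw [div_le_iff₀ hρτ]; linarith [hfe τ hτ]
  have hdnn : 0 ≤ f τ / ρ τ := div_nonneg (hfnn τ hτ0) (le_of_lt hρτ)
  rw [Real.norm_eq_abs, abs_of_nonneg hdnn]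
  calc f τ / ρ τ ≤ e := hdiv
    _ < ε := by rw [hedef]; linarith
end

section
/- Suppose f and ρ > 0 are C¹ functions on (-∞,0] with f(τ) → 0 and ρ(τ) → 0 as τ → -∞, satisfying ∂_τ f = λ f - μ ρ + o(ρ) and ∂_τ ρ = o(ρ), where λ ≠ 0 and μ are constants. Then either there exists δ > 0 such that ρ(τ) ≲ e^{δτ} for τ negative enough, or f = λ^{-1} μ ρ + o(ρ) as τ → -∞. -/
open Real Set Filter Topology

lemma integral_exp_mul_eq (c : ℝ) (hc : c ≠ 0) (a b : ℝ) :
    ∫ s in a..b, Real.exp (c * s) = (Real.exp (c * b) - Real.exp (c * a)) / c := by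
  have hD : ∀ s ∈ uIcc a b, HasDerivAt (fun s => Real.exp (c * s) / c) (Real.exp (c * s)) s := by
    intro s _
    have h1 : HasDerivAt (fun s : ℝ => c * s) c s := by
      simpa using (hasDerivAt_id s).const_mul c
    have h3 := h1.exp.div_const c
    simpa [mul_div_assoc, mul_div_cancel_right₀ _ hc] using h3
  have hint : IntervalIntegrable (fun s => Real.exp (c * s)) MeasureTheory.volume a b :=
    (Real.continuous_exp.comp (continuous_const.mul continuous_id)).intervalIntegrable a b
  rw [intervalIntegral.integral_eq_sub_of_hasDerivAt hD hint]
  ring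


/-- ODE lemma (`lem:ode-decay2`): if `f' = λ f - μ ρ + o(ρ)` and `ρ' = o(ρ)` with `ρ > 0`,
both `f` and `ρ` tending to `0` at `-∞`, and `λ ≠ 0`, then either `ρ ≲ e^{δτ}` for some
`δ > 0`, or `f = λ⁻¹ μ ρ + o(ρ)` as `τ → -∞`. -/
theorem stmt4 (f ρ f' ρ' g₁ : ℝ → ℝ) (lam μ : ℝ) (hlam : lam ≠ 0)
    (hρpos : ∀ τ ≤ (0:ℝ), 0 < ρ τ)
    (hf : ∀ τ ≤ (0:ℝ), HasDerivAt f (f' τ) τ)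
    (hρ : ∀ τ ≤ (0:ℝ), HasDerivAt ρ (ρ' τ) τ)
    (hf'c : ContinuousOn f' (Iic 0)) (hρ'c : ContinuousOn ρ' (Iic 0))
    (hf0 : Tendsto f atBot (nhds 0)) (hρ0 : Tendsto ρ atBot (nhds 0))
    (heq : ∀ τ ≤ (0:ℝ), f' τ = lam * f τ - μ * ρ τ + g₁ τ)
    (hg₁ : Tendsto (fun τ => g₁ τ / ρ τ) atBot (nhds 0))
    (hρ' : Tendsto (fun τ => ρ' τ / ρ τ) atBot (nhds 0)) :
    (∃ δ > (0:ℝ), ∃ C > (0:ℝ), ∀ᶠ τ in atBot, ρ τ ≤ C * Real.exp (δ * τ)) ∨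
      Tendsto (fun τ => (f τ - lam⁻¹ * μ * ρ τ) / ρ τ) atBot (nhds 0) := by
  right
  have habs : 0 < |lam| := abs_pos.mpr hlam
  set δ : ℝ := |lam| / 2 with hδdef
  have hδ : 0 < δ := by positivity
  set A : ℝ := |lam⁻¹ * μ| with hAdef
  have hA0 : 0 ≤ A := abs_nonneg _
  -- continuity facts
  have hfc : ContinuousOn f (Iic 0) := fun τ hτ => ((hf τ hτ).continuousAt).continuousWithinAt
  have hρc : ContinuousOn ρ (Iic 0) := fun τ hτ => ((hρ τ hτ).continuousAt).continuousWithinAt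
  have heC : ContinuousOn (fun τ => g₁ τ - lam⁻¹ * μ * ρ' τ) (Iic 0) := by
    have h1 : ContinuousOn
        (fun τ => (f' τ - lam * f τ + μ * ρ τ) - lam⁻¹ * μ * ρ' τ) (Iic 0) :=
      ((hf'c.sub (continuousOn_const.mul hfc)).add (continuousOn_const.mul hρc)).sub
        (continuousOn_const.mul hρ'c)
    refine h1.congr fun τ hτ => ?_
    beta_reduce; rw [heq τ hτ]; ring
  -- derivative of H
  have hH : ∀ τ ≤ (0:ℝ), HasDerivAt (fun s => (f s - lam⁻¹ * μ * ρ s) * Real.exp (-lam * s))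
      (Real.exp (-lam * τ) * (g₁ τ - lam⁻¹ * μ * ρ' τ)) τ := by
    intro τ hτ
    have hder1 : HasDerivAt (fun s => f s - lam⁻¹ * μ * ρ s) (f' τ - lam⁻¹ * μ * ρ' τ) τ :=
      (hf τ hτ).sub ((hρ τ hτ).const_mul _)
    have hexp : HasDerivAt (fun s : ℝ => Real.exp (-lam * s)) (Real.exp (-lam * τ) * (-lam)) τ := by
      have h1 : HasDerivAt (fun s : ℝ => -lam * s) (-lam) τ := by
        simpa using (hasDerivAt_id τ).const_mul (-lam)
      exact h1.exp
    have hprod := hder1.mul hexp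
    refine HasDerivAt.congr_deriv hprod ?_
    rw [heq τ hτ]
    field_simp
    ring
  -- FTC
  have hFTC : ∀ a b : ℝ, a ≤ b → b ≤ 0 →
      (f b - lam⁻¹ * μ * ρ b) * Real.exp (-lam * b)
        - (f a - lam⁻¹ * μ * ρ a) * Real.exp (-lam * a)
        = ∫ s in a..b, Real.exp (-lam * s) * (g₁ s - lam⁻¹ * μ * ρ' s) := by
    intro a b hab hb0
    have hsub : uIcc a b ⊆ Iic 0 := by
      rw [uIcc_of_le hab]; exact fun x hx => le_trans hx.2 hb0
    have hint : IntervalIntegrable (fun s => Real.exp (-lam * s) * (g₁ s - lam⁻¹ * μ * ρ' s))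
        MeasureTheory.volume a b :=
      (((Real.continuous_exp.comp (continuous_const.mul continuous_id)).continuousOn).mul
        (heC.mono hsub)).intervalIntegrable
    exact (intervalIntegral.integral_eq_sub_of_hasDerivAt (fun x hx => hH x (hsub hx)) hint).symm
  rw [NormedAddCommGroup.tendsto_nhds_zero]
  intro ε hε
  set ε₁ : ℝ := ε * δ / (4 * (1 + A)) with hε₁def
  have hε₁ : 0 < ε₁ := by positivity
  have hev := ((NormedAddCommGroup.tendsto_nhds_zero.mp hg₁) ε₁ hε₁).and
      ((NormedAddCommGroup.tendsto_nhds_zero.mp hρ') (min ε₁ δ) (lt_min hε₁ hδ))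
  obtain ⟨T₀, hT₀⟩ := eventually_atBot.mp hev
  set T : ℝ := min T₀ 0 with hTdef
  have hT0 : T ≤ (0:ℝ) := min_le_right _ _
  have hbound : ∀ τ ≤ T, |g₁ τ| / |ρ τ| < ε₁ ∧ |ρ' τ| / |ρ τ| < ε₁ ∧ |ρ' τ| / |ρ τ| < δ := by
    intro τ hτ
    have := hT₀ τ (le_trans hτ (min_le_left _ _))
    simpa [Real.norm_eq_abs, lt_min_iff, abs_div] using this
  -- pointwise bounds
  have hg₁b : ∀ τ ≤ T, |g₁ τ| ≤ ε₁ * ρ τ := by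
    intro τ hτ
    have hρp := hρpos τ (le_trans hτ hT0)
    have h1 := (hbound τ hτ).1
    rw [abs_of_pos hρp, div_lt_iff₀ hρp] at h1
    linarith
  have hρ'b : ∀ τ ≤ T, |ρ' τ| ≤ ε₁ * ρ τ ∧ |ρ' τ| ≤ δ * ρ τ := by
    intro τ hτ
    have hρp := hρpos τ (le_trans hτ hT0)
    have h1 := (hbound τ hτ).2.1
    have h2 := (hbound τ hτ).2.2
    rw [abs_of_pos hρp, div_lt_iff₀ hρp] at h1 h2
    exact ⟨by linarith, by linarith⟩
  have heb : ∀ τ ≤ T, |g₁ τ - lam⁻¹ * μ * ρ' τ| ≤ (ε * δ / 4) * ρ τ := by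
    intro τ hτ
    have h1 := hg₁b τ hτ
    have h2 := (hρ'b τ hτ).1
    have h3 : |g₁ τ - lam⁻¹ * μ * ρ' τ| ≤ |g₁ τ| + A * |ρ' τ| := by
      calc |g₁ τ - lam⁻¹ * μ * ρ' τ| ≤ |g₁ τ| + |lam⁻¹ * μ * ρ' τ| := abs_sub _ _
        _ = |g₁ τ| + A * |ρ' τ| := by rw [abs_mul]
    have h4 : A * |ρ' τ| ≤ A * (ε₁ * ρ τ) := mul_le_mul_of_nonneg_left h2 hA0
    have hε₁A : ε₁ * (1 + A) = ε * δ / 4 := by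
      rw [hε₁def]; field_simp
    have h5 : ε₁ * ρ τ + A * (ε₁ * ρ τ) = ε * δ / 4 * ρ τ := by rw [← hε₁A]; ring
    linarith
  -- comparison of ρ values
  have hcomp : ∀ σ τ : ℝ, σ ≤ τ → τ ≤ T →
      ρ σ ≤ ρ τ * Real.exp (δ * (τ - σ)) ∧ ρ τ ≤ ρ σ * Real.exp (δ * (τ - σ)) := by
    intro σ τ hστ hτT
    have hτ0 : τ ≤ 0 := le_trans hτT hT0
    have hσ0 : σ ≤ 0 := le_trans hστ hτ0
    rcases eq_or_lt_of_le hστ with rfl | hlt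
    · constructor <;> simp
    · have hcont : ContinuousOn (fun s => Real.log (ρ s)) (Icc σ τ) := by
        apply ContinuousOn.log
        · exact hρc.mono (fun x hx => le_trans hx.2 hτ0)
        · exact fun x hx => (hρpos x (le_trans hx.2 hτ0)).ne'
      have hdiff : ∀ x ∈ Ioo σ τ, HasDerivAt (fun s => Real.log (ρ s)) (ρ' x / ρ x) x := by
        intro x hx
        have hx0 : x ≤ 0 := le_trans hx.2.le hτ0
        exact (hρ x hx0).log (hρpos x hx0).ne'
      obtain ⟨c, hc, hceq⟩ := exists_hasDerivAt_eq_slope (fun s => Real.log (ρ s))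
        (fun s => ρ' s / ρ s) hlt hcont hdiff
      have hcT : c ≤ T := le_trans hc.2.le hτT
      have hcb : |ρ' c / ρ c| ≤ δ := by
        rw [abs_div]; exact (hbound c hcT).2.2.le
      have hslope : |Real.log (ρ τ) - Real.log (ρ σ)| ≤ δ * (τ - σ) := by
        have h2 : Real.log (ρ τ) - Real.log (ρ σ) = (ρ' c / ρ c) * (τ - σ) := by
          rw [hceq, div_mul_cancel₀]
          exact sub_ne_zero.mpr hlt.ne'
        rw [h2, abs_mul, abs_of_pos (by linarith : (0:ℝ) < τ - σ)]
        exact mul_le_mul_of_nonneg_right hcb (by linarith)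
      have hρσ := hρpos σ hσ0
      have hρτ := hρpos τ hτ0
      have habs1 := abs_le.mp hslope
      constructor
      · have hlog : Real.log (ρ σ) ≤ Real.log (ρ τ) + δ * (τ - σ) := by linarith [habs1.1]
        calc ρ σ = Real.exp (Real.log (ρ σ)) := (Real.exp_log hρσ).symm
          _ ≤ Real.exp (Real.log (ρ τ) + δ * (τ - σ)) := Real.exp_le_exp.mpr hlog
          _ = ρ τ * Real.exp (δ * (τ - σ)) := by rw [Real.exp_add, Real.exp_log hρτ]
      · have hlog : Real.log (ρ τ) ≤ Real.log (ρ σ) + δ * (τ - σ) := by linarith [habs1.2]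
        calc ρ τ = Real.exp (Real.log (ρ τ)) := (Real.exp_log hρτ).symm
          _ ≤ Real.exp (Real.log (ρ σ) + δ * (τ - σ)) := Real.exp_le_exp.mpr hlog
          _ = ρ σ * Real.exp (δ * (τ - σ)) := by rw [Real.exp_add, Real.exp_log hρσ]
  -- integrand continuity helper for integrability on subintervals of Iic 0
  have hFcont : ∀ a b : ℝ, a ≤ b → b ≤ 0 →
      IntervalIntegrable (fun s => |Real.exp (-lam * s) * (g₁ s - lam⁻¹ * μ * ρ' s)|)
        MeasureTheory.volume a b := by
    intro a b hab hb0
    have hsub : uIcc a b ⊆ Iic 0 := by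
      rw [uIcc_of_le hab]; exact fun x hx => le_trans hx.2 hb0
    exact ((((Real.continuous_exp.comp (continuous_const.mul continuous_id)).continuousOn).mul
      (heC.mono hsub)).abs).intervalIntegrable
  -- generic integral bound (covers both cases): for a ≤ b ≤ T and a "reference point" p
  -- with ρ s ≤ ρ p * exp(δ |s - p|) we bound directly in each case below.
  rcases hlam.lt_or_gt with hneg | hpos
  · -- lam < 0 : anchor at σ → -∞
    have hlam2 : lam = -(2 * δ) := by
      rw [hδdef, abs_of_neg hneg]; ring
    have hIb : ∀ σ τ : ℝ, σ ≤ τ → τ ≤ T →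
        |∫ s in σ..τ, Real.exp (-lam * s) * (g₁ s - lam⁻¹ * μ * ρ' s)|
          ≤ (ε / 4) * ρ τ * Real.exp (-lam * τ) := by
      intro σ τ hστ hτT
      have hτ0 : τ ≤ 0 := le_trans hτT hT0
      set C : ℝ := (ε * δ / 4) * ρ τ * Real.exp (δ * τ) with hCdef
      have hρτ := hρpos τ hτ0
      have hC : 0 < C := by positivity
      have hle : ∀ s ∈ Icc σ τ, |Real.exp (-lam * s) * (g₁ s - lam⁻¹ * μ * ρ' s)|
          ≤ C * Real.exp (δ * s) := by
        intro s hs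
        have hsT : s ≤ T := le_trans hs.2 hτT
        have h1 : |g₁ s - lam⁻¹ * μ * ρ' s| ≤ (ε * δ / 4) * ρ s := heb s hsT
        have h2 : ρ s ≤ ρ τ * Real.exp (δ * (τ - s)) := (hcomp s τ hs.2 hτT).1
        have hexps : (0:ℝ) < Real.exp (-lam * s) := Real.exp_pos _
        rw [abs_mul, abs_of_pos hexps]
        calc Real.exp (-lam * s) * |g₁ s - lam⁻¹ * μ * ρ' s|
            ≤ Real.exp (-lam * s) * ((ε * δ / 4) * (ρ τ * Real.exp (δ * (τ - s)))) := by
              apply mul_le_mul_of_nonneg_left _ hexps.le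
              exact le_trans h1 (mul_le_mul_of_nonneg_left h2 (by positivity))
          _ = C * Real.exp (δ * s) := by
              have hexpeq : Real.exp (-lam * s) * Real.exp (δ * (τ - s))
                  = Real.exp (δ * τ) * Real.exp (δ * s) := by
                rw [← Real.exp_add, ← Real.exp_add, hlam2]; ring_nf
              rw [hCdef]
              linear_combination (ε * δ / 4 * ρ τ) * hexpeq
      have hint1 := hFcont σ τ hστ hτ0
      have hint2 : IntervalIntegrable (fun s => C * Real.exp (δ * s))
          MeasureTheory.volume σ τ :=
        (continuous_const.mul (Real.continuous_exp.comp
          (continuous_const.mul continuous_id))).intervalIntegrable σ τ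
      calc |∫ s in σ..τ, Real.exp (-lam * s) * (g₁ s - lam⁻¹ * μ * ρ' s)|
          ≤ ∫ s in σ..τ, |Real.exp (-lam * s) * (g₁ s - lam⁻¹ * μ * ρ' s)| :=
            intervalIntegral.abs_integral_le_integral_abs hστ
        _ ≤ ∫ s in σ..τ, C * Real.exp (δ * s) :=
            intervalIntegral.integral_mono_on hστ hint1 hint2 hle
        _ = C * ((Real.exp (δ * τ) - Real.exp (δ * σ)) / δ) := by
            rw [intervalIntegral.integral_const_mul, integral_exp_mul_eq δ hδ.ne']
        _ ≤ C * (Real.exp (δ * τ) / δ) := by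
            have := Real.exp_pos (δ * σ)
            gcongr
            linarith
        _ = (ε / 4) * ρ τ * Real.exp (-lam * τ) := by
            have e : Real.exp (-lam * τ) = Real.exp (δ * τ) * Real.exp (δ * τ) := by
              rw [← Real.exp_add, hlam2]; ring_nf
            rw [hCdef, e]
            field_simp
    -- key pointwise bound via σ → -∞
    have hh0 : Tendsto (fun σ => |f σ - lam⁻¹ * μ * ρ σ|) atBot (𝓝 0) := by
      have h1 : Tendsto (fun σ => f σ - lam⁻¹ * μ * ρ σ) atBot (𝓝 0) := by
        simpa using hf0.sub (hρ0.const_mul (lam⁻¹ * μ))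
      simpa using h1.abs
    have hkey : ∀ τ ≤ T, |f τ - lam⁻¹ * μ * ρ τ| ≤ (ε / 4) * ρ τ := by
      intro τ hτT
      have hτ0 : τ ≤ 0 := le_trans hτT hT0
      have hexpτ : (0:ℝ) < Real.exp (-lam * τ) := Real.exp_pos _
      -- for every σ ≤ τ
      have hstep : ∀ σ ≤ τ, |f τ - lam⁻¹ * μ * ρ τ|
          ≤ Real.exp (lam * τ) * Real.exp (-lam * σ) * |f σ - lam⁻¹ * μ * ρ σ|
            + (ε / 4) * ρ τ := by
        intro σ hστ
        have hid := hFTC σ τ hστ hτ0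
        have h2 : |(f τ - lam⁻¹ * μ * ρ τ) * Real.exp (-lam * τ)|
            ≤ |(f σ - lam⁻¹ * μ * ρ σ) * Real.exp (-lam * σ)|
              + (ε / 4) * ρ τ * Real.exp (-lam * τ) := by
          have h3 := hIb σ τ hστ hτT
          rw [← hid] at h3
          calc |(f τ - lam⁻¹ * μ * ρ τ) * Real.exp (-lam * τ)|
              ≤ |(f σ - lam⁻¹ * μ * ρ σ) * Real.exp (-lam * σ)|
                + |(f τ - lam⁻¹ * μ * ρ τ) * Real.exp (-lam * τ)
                  - (f σ - lam⁻¹ * μ * ρ σ) * Real.exp (-lam * σ)| := by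
                  have := abs_sub_abs_le_abs_sub ((f τ - lam⁻¹ * μ * ρ τ) * Real.exp (-lam * τ))
                    ((f σ - lam⁻¹ * μ * ρ σ) * Real.exp (-lam * σ))
                  linarith [abs_nonneg ((f τ - lam⁻¹ * μ * ρ τ) * Real.exp (-lam * τ)
                    - (f σ - lam⁻¹ * μ * ρ σ) * Real.exp (-lam * σ))]
            _ ≤ _ := by linarith
        rw [abs_mul, abs_of_pos hexpτ, abs_mul, abs_of_pos (Real.exp_pos (-lam * σ))] at h2
        -- multiply through by exp (lam τ)
        have hmul : Real.exp (-lam * τ) * Real.exp (lam * τ) = 1 := by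
          rw [← Real.exp_add]; simp
        have h4 := mul_le_mul_of_nonneg_right h2 (Real.exp_pos (lam * τ)).le
        calc |f τ - lam⁻¹ * μ * ρ τ|
            = |f τ - lam⁻¹ * μ * ρ τ| * (Real.exp (-lam * τ) * Real.exp (lam * τ)) := by
              rw [hmul, mul_one]
          _ = (|f τ - lam⁻¹ * μ * ρ τ| * Real.exp (-lam * τ)) * Real.exp (lam * τ) := by ring
          _ ≤ (|f σ - lam⁻¹ * μ * ρ σ| * Real.exp (-lam * σ)
                + ε / 4 * ρ τ * Real.exp (-lam * τ)) * Real.exp (lam * τ) := h4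
          _ = Real.exp (lam * τ) * Real.exp (-lam * σ) * |f σ - lam⁻¹ * μ * ρ σ|
                + (ε / 4) * ρ τ * (Real.exp (-lam * τ) * Real.exp (lam * τ)) := by ring
          _ = _ := by rw [hmul, mul_one]
      -- take the limit σ → -∞
      have hlim : Tendsto (fun σ => Real.exp (lam * τ) * Real.exp (-lam * σ)
          * |f σ - lam⁻¹ * μ * ρ σ| + (ε / 4) * ρ τ) atBot (𝓝 ((ε / 4) * ρ τ)) := by
        have hexp0 : Tendsto (fun σ : ℝ => Real.exp (-lam * σ)) atBot (𝓝 0) := by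
          apply Real.tendsto_exp_atBot.comp
          exact tendsto_const_mul_atBot_of_pos (by linarith : (0:ℝ) < -lam) |>.mpr tendsto_id
        have h5 : Tendsto (fun σ => Real.exp (lam * τ) * Real.exp (-lam * σ)
            * |f σ - lam⁻¹ * μ * ρ σ|) atBot (𝓝 0) := by
          have := ((hexp0.const_mul (Real.exp (lam * τ))).mul hh0)
          simpa using this
        simpa using h5.add (tendsto_const_nhds (x := (ε / 4) * ρ τ))
      exact ge_of_tendsto hlim (eventually_atBot.mpr ⟨τ, hstep⟩)
    -- finish
    refine eventually_atBot.mpr ⟨T, fun τ hτT => ?_⟩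
    have hτ0 : τ ≤ 0 := le_trans hτT hT0
    have hρτ := hρpos τ hτ0
    have h1 := hkey τ hτT
    rw [Real.norm_eq_abs, abs_div, abs_of_pos hρτ, div_lt_iff₀ hρτ]
    nlinarith
  · -- lam > 0 : anchor at T
    have hlam2 : lam = 2 * δ := by
      rw [hδdef, abs_of_pos hpos]; ring
    have hIb : ∀ τ : ℝ, τ ≤ T →
        |∫ s in τ..T, Real.exp (-lam * s) * (g₁ s - lam⁻¹ * μ * ρ' s)|
          ≤ (ε / 4) * ρ τ * Real.exp (-lam * τ) := by
      intro τ hτT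
      have hτ0 : τ ≤ 0 := le_trans hτT hT0
      set C : ℝ := (ε * δ / 4) * ρ τ * Real.exp (-δ * τ) with hCdef
      have hρτ := hρpos τ hτ0
      have hC : 0 < C := by positivity
      have hle : ∀ s ∈ Icc τ T, |Real.exp (-lam * s) * (g₁ s - lam⁻¹ * μ * ρ' s)|
          ≤ C * Real.exp (-δ * s) := by
        intro s hs
        have hsT : s ≤ T := hs.2
        have h1 : |g₁ s - lam⁻¹ * μ * ρ' s| ≤ (ε * δ / 4) * ρ s := heb s hsT
        have h2 : ρ s ≤ ρ τ * Real.exp (δ * (s - τ)) := (hcomp τ s hs.1 hsT).2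
        have hexps : (0:ℝ) < Real.exp (-lam * s) := Real.exp_pos _
        rw [abs_mul, abs_of_pos hexps]
        calc Real.exp (-lam * s) * |g₁ s - lam⁻¹ * μ * ρ' s|
            ≤ Real.exp (-lam * s) * ((ε * δ / 4) * (ρ τ * Real.exp (δ * (s - τ)))) := by
              apply mul_le_mul_of_nonneg_left _ hexps.le
              exact le_trans h1 (mul_le_mul_of_nonneg_left h2 (by positivity))
          _ = C * Real.exp (-δ * s) := by
              have hexpeq : Real.exp (-lam * s) * Real.exp (δ * (s - τ))
                  = Real.exp (-δ * τ) * Real.exp (-δ * s) := by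
                rw [← Real.exp_add, ← Real.exp_add, hlam2]; ring_nf
              rw [hCdef]
              linear_combination (ε * δ / 4 * ρ τ) * hexpeq
      have hint1 := hFcont τ T hτT hT0
      have hint2 : IntervalIntegrable (fun s => C * Real.exp (-δ * s))
          MeasureTheory.volume τ T :=
        (continuous_const.mul (Real.continuous_exp.comp
          (continuous_const.mul continuous_id))).intervalIntegrable τ T
      calc |∫ s in τ..T, Real.exp (-lam * s) * (g₁ s - lam⁻¹ * μ * ρ' s)|
          ≤ ∫ s in τ..T, |Real.exp (-lam * s) * (g₁ s - lam⁻¹ * μ * ρ' s)| :=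
            intervalIntegral.abs_integral_le_integral_abs hτT
        _ ≤ ∫ s in τ..T, C * Real.exp (-δ * s) :=
            intervalIntegral.integral_mono_on hτT hint1 hint2 hle
        _ = C * ((Real.exp (-δ * T) - Real.exp (-δ * τ)) / (-δ)) := by
            rw [intervalIntegral.integral_const_mul, integral_exp_mul_eq (-δ) (by linarith)]
        _ ≤ C * (Real.exp (-δ * τ) / δ) := by
            have e1 := Real.exp_pos (-δ * T)
            rw [show ((Real.exp (-δ * T) - Real.exp (-δ * τ)) / (-δ))
              = (Real.exp (-δ * τ) - Real.exp (-δ * T)) / δ by ring]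
            gcongr
            linarith
        _ = (ε / 4) * ρ τ * Real.exp (-lam * τ) := by
            have e : Real.exp (-lam * τ) = Real.exp (-δ * τ) * Real.exp (-δ * τ) := by
              rw [← Real.exp_add, hlam2]; ring_nf
            rw [hCdef, e]
            field_simp
    -- key pointwise bound
    set HT : ℝ := |(f T - lam⁻¹ * μ * ρ T) * Real.exp (-lam * T)| with hHTdef
    have hkey : ∀ τ ≤ T, |f τ - lam⁻¹ * μ * ρ τ|
        ≤ Real.exp (lam * τ) * HT + (ε / 4) * ρ τ := by
      intro τ hτT
      have hτ0 : τ ≤ 0 := le_trans hτT hT0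
      have hexpτ : (0:ℝ) < Real.exp (-lam * τ) := Real.exp_pos _
      have hid := hFTC τ T hτT hT0
      have h3 := hIb τ hτT
      rw [← hid] at h3
      have h2 : |(f τ - lam⁻¹ * μ * ρ τ) * Real.exp (-lam * τ)|
          ≤ HT + (ε / 4) * ρ τ * Real.exp (-lam * τ) := by
        have := abs_sub_abs_le_abs_sub ((f τ - lam⁻¹ * μ * ρ τ) * Real.exp (-lam * τ))
          ((f T - lam⁻¹ * μ * ρ T) * Real.exp (-lam * T))
        rw [abs_sub_comm] at h3
        linarith
      rw [abs_mul, abs_of_pos hexpτ] at h2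
      have hmul : Real.exp (-lam * τ) * Real.exp (lam * τ) = 1 := by
        rw [← Real.exp_add]; simp
      have h4 := mul_le_mul_of_nonneg_right h2 (Real.exp_pos (lam * τ)).le
      calc |f τ - lam⁻¹ * μ * ρ τ|
          = (|f τ - lam⁻¹ * μ * ρ τ| * Real.exp (-lam * τ)) * Real.exp (lam * τ) := by
            simp [mul_assoc, ← Real.exp_add]
        _ ≤ (HT + ε / 4 * ρ τ * Real.exp (-lam * τ)) * Real.exp (lam * τ) := h4
        _ = Real.exp (lam * τ) * HT + (ε / 4) * ρ τ * (Real.exp (-lam * τ) * Real.exp (lam * τ)) := by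
            ring
        _ = _ := by rw [hmul, mul_one]
    -- lower bound on ρ τ and exponential smallness
    have hρT := hρpos T hT0
    set K : ℝ := HT * Real.exp (δ * T) / ρ T with hKdef
    have hK0 : 0 ≤ K := by positivity
    have hquot : ∀ τ ≤ T, Real.exp (lam * τ) * HT / ρ τ ≤ K * Real.exp (δ * τ) := by
      intro τ hτT
      have hτ0 : τ ≤ 0 := le_trans hτT hT0
      have hρτ := hρpos τ hτ0
      have h2 : ρ T ≤ ρ τ * Real.exp (δ * (T - τ)) := (hcomp τ T hτT le_rfl).2
      have hHT0 : 0 ≤ HT := abs_nonneg _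
      have hexpeq3 : Real.exp (lam * τ) * Real.exp (δ * (T - τ))
          = Real.exp (δ * T) * Real.exp (δ * τ) := by
        rw [← Real.exp_add, ← Real.exp_add, hlam2]; ring_nf
      rw [hKdef, div_mul_eq_mul_div, div_le_div_iff₀ hρτ hρT]
      have h3 : Real.exp (lam * τ) * HT * ρ T
          ≤ Real.exp (lam * τ) * HT * (ρ τ * Real.exp (δ * (T - τ))) :=
        mul_le_mul_of_nonneg_left h2 (by positivity)
      calc Real.exp (lam * τ) * HT * ρ T
          ≤ Real.exp (lam * τ) * HT * (ρ τ * Real.exp (δ * (T - τ))) := h3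
        _ = HT * Real.exp (δ * T) * Real.exp (δ * τ) * ρ τ := by
            linear_combination HT * ρ τ * hexpeq3
    have hsmall : ∀ᶠ τ in atBot, K * Real.exp (δ * τ) < ε / 2 := by
      have htend : Tendsto (fun τ : ℝ => K * Real.exp (δ * τ)) atBot (𝓝 0) := by
        have hexp0 : Tendsto (fun τ : ℝ => Real.exp (δ * τ)) atBot (𝓝 0) := by
          apply Real.tendsto_exp_atBot.comp
          exact tendsto_const_mul_atBot_of_pos hδ |>.mpr tendsto_id
        simpa using hexp0.const_mul K
      exact htend.eventually_lt_const (by linarith)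
    filter_upwards [hsmall, eventually_le_atBot T] with τ hτs hτT
    have hτ0 : τ ≤ 0 := le_trans hτT hT0
    have hρτ := hρpos τ hτ0
    have h1 := hkey τ hτT
    have h2 := hquot τ hτT
    rw [Real.norm_eq_abs, abs_div, abs_of_pos hρτ, div_lt_iff₀ hρτ]
    rw [div_le_iff₀ hρτ] at h2
    nlinarith
end

section
/- Suppose ρ > 0 and f are C¹ functions on (-∞,0] with f(τ) → 0 and ρ(τ) → 0 as τ → -∞, satisfying ∂_τ f = λ f + O(ρ) and ∂_τ ρ = o(ρ), where λ ≠ 0 is a constant. Then either there exists δ > 0 such that ρ(τ) ≲ e^{δτ}, or |f(τ)| ≲ ρ(τ) for τ negative enough. -/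
open Real Set Filter Topology

private lemma expDeriv (c x : ℝ) : HasDerivAt (fun s => Real.exp (c*s)) (c * Real.exp (c*x)) x := by
  simpa [mul_comm] using ((hasDerivAt_id x).const_mul c).exp

private lemma int_exp (c a b : ℝ) (hc : c ≠ 0) :
    ∫ s in a..b, Real.exp (c*s) = (Real.exp (c*b) - Real.exp (c*a))/c := by
  have hd : ∀ x ∈ uIcc a b, HasDerivAt (fun s => Real.exp (c*s)/c) (Real.exp (c*x)) x := by
    intro x _
    have := (expDeriv c x).div_const c
    simpa [mul_div_assoc, mul_div_cancel_left₀ _ hc] using this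
  rw [intervalIntegral.integral_eq_sub_of_hasDerivAt hd
    ((Real.continuous_exp.comp (continuous_const.mul continuous_id)).continuousOn.intervalIntegrable)]
  ring

private lemma rho_gronwall (ρ ρ' : ℝ → ℝ) (T ε : ℝ)
    (hρd : ∀ τ ≤ T, HasDerivAt ρ (ρ' τ) τ)
    (hb : ∀ τ ≤ T, |ρ' τ| ≤ ε * ρ τ) :
    ∀ a b, a ≤ b → b ≤ T →
      ρ b ≤ ρ a * Real.exp (ε*(b-a)) ∧ ρ a ≤ ρ b * Real.exp (ε*(b-a)) := by
  have hcont : ContinuousOn ρ (Iic T) := fun x hx => ((hρd x hx).continuousAt).continuousWithinAt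
  have hderivm : ∀ x ≤ T, HasDerivAt (fun x => ρ x * Real.exp (-ε*x))
      ((ρ' x - ε * ρ x) * Real.exp (-ε*x)) x := by
    intro x hx
    have : HasDerivAt (fun x => ρ x * Real.exp (-ε*x)) _ x := (hρd x hx).fun_mul (expDeriv (-ε) x)
    convert this using 1
    ring
  have hderivp : ∀ x ≤ T, HasDerivAt (fun x => ρ x * Real.exp (ε*x))
      ((ρ' x + ε * ρ x) * Real.exp (ε*x)) x := by
    intro x hx
    have : HasDerivAt (fun x => ρ x * Real.exp (ε*x)) _ x := (hρd x hx).fun_mul (expDeriv ε x)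
    convert this using 1
    ring
  have hanti : AntitoneOn (fun x => ρ x * Real.exp (-ε*x)) (Iic T) := by
    apply antitoneOn_of_deriv_nonpos (convex_Iic T)
    · exact hcont.mul (Real.continuous_exp.comp (continuous_const.mul continuous_id)).continuousOn
    · intro x hx
      rw [interior_Iic] at hx
      exact ((hderivm x hx.le).differentiableAt).differentiableWithinAt
    · intro x hx
      rw [interior_Iic] at hx
      rw [(hderivm x hx.le).deriv]
      have h1 : ρ' x ≤ ε * ρ x := (abs_le.mp (hb x hx.le)).2
      have := Real.exp_pos (-ε*x)
      nlinarith
  have hmono : MonotoneOn (fun x => ρ x * Real.exp (ε*x)) (Iic T) := by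
    apply monotoneOn_of_deriv_nonneg (convex_Iic T)
    · exact hcont.mul (Real.continuous_exp.comp (continuous_const.mul continuous_id)).continuousOn
    · intro x hx
      rw [interior_Iic] at hx
      exact ((hderivp x hx.le).differentiableAt).differentiableWithinAt
    · intro x hx
      rw [interior_Iic] at hx
      rw [(hderivp x hx.le).deriv]
      have h1 : -(ε * ρ x) ≤ ρ' x := (abs_le.mp (hb x hx.le)).1
      have := Real.exp_pos (ε*x)
      nlinarith
  intro a b hab hbT
  have haT : a ≤ T := hab.trans hbT
  constructor
  · have := hanti (mem_Iic.mpr haT) (mem_Iic.mpr hbT) hab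
    have h2 : ρ b * Real.exp (-ε*b) * Real.exp (ε*b) ≤ ρ a * Real.exp (-ε*a) * Real.exp (ε*b) :=
      mul_le_mul_of_nonneg_right this (Real.exp_pos _).le
    calc ρ b = ρ b * Real.exp (-ε*b) * Real.exp (ε*b) := by
          rw [mul_assoc, ← Real.exp_add]; ring_nf; simp
      _ ≤ ρ a * Real.exp (-ε*a) * Real.exp (ε*b) := h2
      _ = ρ a * Real.exp (ε*(b-a)) := by rw [mul_assoc, ← Real.exp_add]; ring_nf
  · have := hmono (mem_Iic.mpr haT) (mem_Iic.mpr hbT) hab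
    have h2 : ρ a * Real.exp (ε*a) * Real.exp (-ε*a) ≤ ρ b * Real.exp (ε*b) * Real.exp (-ε*a) :=
      mul_le_mul_of_nonneg_right this (Real.exp_pos _).le
    calc ρ a = ρ a * Real.exp (ε*a) * Real.exp (-ε*a) := by
          rw [mul_assoc, ← Real.exp_add]; ring_nf; simp
      _ ≤ ρ b * Real.exp (ε*b) * Real.exp (-ε*a) := h2
      _ = ρ b * Real.exp (ε*(b-a)) := by rw [mul_assoc, ← Real.exp_add]; ring_nf

private lemma voc (f f' : ℝ → ℝ) (lam : ℝ)
    (hf : ∀ τ ≤ (0:ℝ), HasDerivAt f (f' τ) τ) (hf'c : ContinuousOn f' (Iic 0))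
    (a b : ℝ) (hab : a ≤ b) (hb0 : b ≤ 0) :
    ∫ s in a..b, Real.exp (-lam*s) * (f' s - lam * f s)
      = Real.exp (-lam*b) * f b - Real.exp (-lam*a) * f a := by
  have hsub : uIcc a b ⊆ Iic (0:ℝ) := by
    rw [uIcc_of_le hab]; exact fun x hx => (hx.2.trans hb0)
  have hfc : ContinuousOn f (Iic 0) := fun x hx => ((hf x hx).continuousAt).continuousWithinAt
  have hd : ∀ x ∈ uIcc a b, HasDerivAt (fun s => Real.exp (-lam*s) * f s)
      (Real.exp (-lam*x) * (f' x - lam * f x)) x := by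
    intro x hx
    have : HasDerivAt (fun s => Real.exp (-lam*s) * f s) _ x := (expDeriv (-lam) x).fun_mul (hf x (hsub hx))
    convert this using 1
    ring
  have hint : IntervalIntegrable (fun s => Real.exp (-lam*s) * (f' s - lam * f s))
      MeasureTheory.volume a b := by
    apply ContinuousOn.intervalIntegrable
    apply ContinuousOn.mul
    · exact (Real.continuous_exp.comp (continuous_const.mul continuous_id)).continuousOn
    · exact ((hf'c.mono hsub).sub ((continuousOn_const.mul (hfc.mono hsub))))
  exact intervalIntegral.integral_eq_sub_of_hasDerivAt hd hint

private lemma int_bound (φ m : ℝ → ℝ) (a b : ℝ) (hab : a ≤ b)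
    (hφ : IntervalIntegrable φ MeasureTheory.volume a b)
    (hm : IntervalIntegrable m MeasureTheory.volume a b)
    (h : ∀ s ∈ Icc a b, |φ s| ≤ m s) :
    |∫ s in a..b, φ s| ≤ ∫ s in a..b, m s := by
  calc |∫ s in a..b, φ s| ≤ ∫ s in a..b, |φ s| :=
        intervalIntegral.abs_integral_le_integral_abs hab
    _ ≤ ∫ s in a..b, m s := intervalIntegral.integral_mono_on hab hφ.abs hm h

/-- ODE lemma (`lem:ode-decayinf`): if `f' = λ f + O(ρ)` and `ρ' = o(ρ)` with `ρ > 0`,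
both `f` and `ρ` tending to `0` at `-∞`, and `λ ≠ 0`, then either `ρ ≲ e^{δτ}` for some
`δ > 0`, or `|f| ≲ ρ` for `τ` negative enough. -/
theorem stmt5 (f ρ f' ρ' : ℝ → ℝ) (lam : ℝ) (hlam : lam ≠ 0)
    (hρpos : ∀ τ ≤ (0:ℝ), 0 < ρ τ)
    (hf : ∀ τ ≤ (0:ℝ), HasDerivAt f (f' τ) τ)
    (hρ : ∀ τ ≤ (0:ℝ), HasDerivAt ρ (ρ' τ) τ)
    (hf'c : ContinuousOn f' (Iic 0)) (hρ'c : ContinuousOn ρ' (Iic 0))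
    (hf0 : Tendsto f atBot (nhds 0)) (hρ0 : Tendsto ρ atBot (nhds 0))
    (hO : ∃ C : ℝ, ∀ᶠ τ in atBot, |f' τ - lam * f τ| ≤ C * ρ τ)
    (hρ'o : Tendsto (fun τ => ρ' τ / ρ τ) atBot (nhds 0)) :
    (∃ δ > (0:ℝ), ∃ C > (0:ℝ), ∀ᶠ τ in atBot, ρ τ ≤ C * Real.exp (δ * τ)) ∨
      (∃ C > (0:ℝ), ∀ᶠ τ in atBot, |f τ| ≤ C * ρ τ) := by
  right
  obtain ⟨C₀, hC₀⟩ := hO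
  set ε : ℝ := |lam| / 2 with hεdef
  have hε : 0 < ε := by
    have := abs_pos.mpr hlam
    positivity
  have h1 : ∀ᶠ τ in atBot, |ρ' τ / ρ τ| < ε := by
    have := Metric.tendsto_nhds.mp hρ'o ε hε
    simpa only [Real.dist_eq, sub_zero] using this
  obtain ⟨T, hT⟩ := eventually_atBot.mp ((h1.and hC₀).and (eventually_le_atBot (0:ℝ)))
  have hT0 : T ≤ 0 := (hT T le_rfl).2
  set C : ℝ := max C₀ 1 with hCdef
  have hC1 : (1:ℝ) ≤ C := le_max_right _ _
  have hCpos : (0:ℝ) < C := lt_of_lt_of_le one_pos hC1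
  have hg : ∀ τ ≤ T, |f' τ - lam * f τ| ≤ C * ρ τ := by
    intro τ hτ
    exact le_trans ((hT τ hτ).1.2)
      (mul_le_mul_of_nonneg_right (le_max_left _ _) (hρpos τ (hτ.trans hT0)).le)
  have hb : ∀ τ ≤ T, |ρ' τ| ≤ ε * ρ τ := by
    intro τ hτ
    have h2 := ((hT τ hτ).1.1).le
    have hp := hρpos τ (hτ.trans hT0)
    rw [abs_div, abs_of_pos hp, div_le_iff₀ hp] at h2
    linarith
  have hρd : ∀ τ ≤ T, HasDerivAt ρ (ρ' τ) τ := fun τ hτ => hρ τ (hτ.trans hT0)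
  have hgron := rho_gronwall ρ ρ' T ε hρd hb
  have hmint : ∀ (c K a b : ℝ), IntervalIntegrable (fun s => K * Real.exp (c*s))
      MeasureTheory.volume a b := fun c K a b =>
    (continuous_const.mul (Real.continuous_exp.comp (continuous_const.mul continuous_id))).intervalIntegrable a b
  have hphiint : ∀ a b : ℝ, a ≤ b → b ≤ 0 →
      IntervalIntegrable (fun s => Real.exp (-lam*s) * (f' s - lam * f s))
        MeasureTheory.volume a b := by
    intro a b hab hb0
    have hsub : uIcc a b ⊆ Iic (0:ℝ) := by
      rw [uIcc_of_le hab]; exact fun x hx => (hx.2.trans hb0)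
    have hfc : ContinuousOn f (Iic 0) := fun x hx => ((hf x hx).continuousAt).continuousWithinAt
    apply ContinuousOn.intervalIntegrable
    apply ContinuousOn.mul
    · exact (Real.continuous_exp.comp (continuous_const.mul continuous_id)).continuousOn
    · exact ((hf'c.mono hsub).sub ((continuousOn_const.mul (hfc.mono hsub))))
  rcases lt_or_gt_of_ne hlam with hneg | hpos
  · -- lam < 0
    have hlam2 : lam = -(2*ε) := by rw [hεdef, abs_of_neg hneg]; ring
    have key : ∀ b ≤ T, |f b| ≤ C/ε * ρ b := by
      intro b hbT
      have hb0 : b ≤ 0 := hbT.trans hT0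
      have step : ∀ a ≤ b, |f b| ≤ |f a| + C/ε * ρ b := by
        intro a hab
        have hiden := voc f f' lam hf hf'c a b hab hb0
        have hpt : ∀ s ∈ Icc a b, |Real.exp (-lam*s) * (f' s - lam * f s)|
            ≤ (C * ρ b * Real.exp (ε*b)) * Real.exp (ε*s) := by
          intro s hs
          have hsT : s ≤ T := hs.2.trans hbT
          have h3 : |f' s - lam * f s| ≤ C * ρ s := hg s hsT
          have h4 : ρ s ≤ ρ b * Real.exp (ε*(b-s)) := (hgron s b hs.2 hbT).2
          have hexp : Real.exp (-lam*s) * Real.exp (ε*(b-s))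
              = Real.exp (ε*b) * Real.exp (ε*s) := by
            rw [← Real.exp_add, ← Real.exp_add]; congr 1; linear_combination (-s) * hlam2
          calc |Real.exp (-lam*s) * (f' s - lam * f s)|
              = Real.exp (-lam*s) * |f' s - lam * f s| := by
                rw [abs_mul, abs_of_pos (Real.exp_pos _)]
            _ ≤ Real.exp (-lam*s) * (C * (ρ b * Real.exp (ε*(b-s)))) := by
                apply mul_le_mul_of_nonneg_left _ (Real.exp_pos _).le
                exact h3.trans (mul_le_mul_of_nonneg_left h4 hCpos.le)
            _ = C * ρ b * (Real.exp (-lam*s) * Real.exp (ε*(b-s))) := by ring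
            _ = C * ρ b * (Real.exp (ε*b) * Real.exp (ε*s)) := by rw [hexp]
            _ = (C * ρ b * Real.exp (ε*b)) * Real.exp (ε*s) := by ring
        have hIb := int_bound _ _ a b hab (hphiint a b hab hb0) (hmint ε _ a b) hpt
        rw [intervalIntegral.integral_const_mul, int_exp ε a b hε.ne'] at hIb
        have hρb := hρpos b hb0
        have he2 : Real.exp (ε*b) * Real.exp (ε*b) = Real.exp (-lam*b) := by
          rw [← Real.exp_add]; congr 1; linear_combination b * hlam2
        have hIb2 : |∫ s in a..b, Real.exp (-lam*s) * (f' s - lam * f s)|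
            ≤ C/ε * ρ b * Real.exp (-lam*b) := by
          refine hIb.trans ?_
          rw [← he2]
          have hea := Real.exp_pos (ε*a)
          have h9 : C * ρ b * Real.exp (ε*b) * ((Real.exp (ε*b) - Real.exp (ε*a)) / ε)
              ≤ C * ρ b * Real.exp (ε*b) * (Real.exp (ε*b) / ε) := by
            apply mul_le_mul_of_nonneg_left _ (by positivity)
            exact (div_le_div_iff_of_pos_right hε).mpr (by linarith)
          refine h9.trans (le_of_eq ?_)
          field_simp
        rw [hiden] at hIb2
        have h5 : Real.exp (-lam*b) * |f b|
            ≤ Real.exp (-lam*a) * |f a| + C/ε * ρ b * Real.exp (-lam*b) := by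
          have htri := abs_sub_abs_le_abs_sub (Real.exp (-lam*b) * f b) (Real.exp (-lam*a) * f a)
          rw [abs_mul, abs_mul, abs_of_pos (Real.exp_pos (-lam*b)),
            abs_of_pos (Real.exp_pos (-lam*a))] at htri
          linarith
        have h7 : Real.exp (-lam*a) ≤ Real.exp (-lam*b) :=
          Real.exp_le_exp.mpr (by nlinarith)
        have h8 : Real.exp (-lam*b) * |f b| ≤ Real.exp (-lam*b) * (|f a| + C/ε * ρ b) := by
          nlinarith [mul_le_mul_of_nonneg_right h7 (abs_nonneg (f a))]
        exact le_of_mul_le_mul_left h8 (Real.exp_pos _)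
      have hlim : Tendsto (fun a => |f a| + C/ε * ρ b) atBot (nhds (C/ε * ρ b)) := by
        have := (hf0.abs).add
          (tendsto_const_nhds : Tendsto (fun _ : ℝ => C/ε * ρ b) atBot (nhds (C/ε * ρ b)))
        simpa using this
      exact ge_of_tendsto hlim ((eventually_le_atBot b).mono step)
    refine ⟨C/ε, by positivity, ?_⟩
    filter_upwards [eventually_le_atBot T] with τ hτ using key τ hτ
  · -- lam > 0
    have hlam2 : lam = 2*ε := by rw [hεdef, abs_of_pos hpos]; ring
    have hρT := hρpos T hT0
    have hfT := abs_nonneg (f T)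
    set K : ℝ := |f T| / ρ T + C/ε with hKdef
    have hKpos : 0 < K :=
      add_pos_of_nonneg_of_pos (div_nonneg hfT hρT.le) (by positivity)
    have key : ∀ τ ≤ T, |f τ| ≤ K * ρ τ := by
      intro τ hτT
      have hτ0 : τ ≤ 0 := hτT.trans hT0
      have hρτ := hρpos τ hτ0
      have hiden := voc f f' lam hf hf'c τ T hτT hT0
      have hεne : (-ε : ℝ) ≠ 0 := neg_ne_zero.mpr hε.ne'
      have hpt : ∀ s ∈ Icc τ T, |Real.exp (-lam*s) * (f' s - lam * f s)|
          ≤ (C * ρ τ * Real.exp (-ε*τ)) * Real.exp (-ε*s) := by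
        intro s hs
        have h3 : |f' s - lam * f s| ≤ C * ρ s := hg s hs.2
        have h4 : ρ s ≤ ρ τ * Real.exp (ε*(s-τ)) := (hgron τ s hs.1 hs.2).1
        have hexp : Real.exp (-lam*s) * Real.exp (ε*(s-τ))
            = Real.exp (-ε*τ) * Real.exp (-ε*s) := by
          rw [← Real.exp_add, ← Real.exp_add]; congr 1; linear_combination (-s) * hlam2
        calc |Real.exp (-lam*s) * (f' s - lam * f s)|
            = Real.exp (-lam*s) * |f' s - lam * f s| := by
              rw [abs_mul, abs_of_pos (Real.exp_pos _)]
          _ ≤ Real.exp (-lam*s) * (C * (ρ τ * Real.exp (ε*(s-τ)))) := by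
              apply mul_le_mul_of_nonneg_left _ (Real.exp_pos _).le
              exact h3.trans (mul_le_mul_of_nonneg_left h4 hCpos.le)
          _ = C * ρ τ * (Real.exp (-lam*s) * Real.exp (ε*(s-τ))) := by ring
          _ = C * ρ τ * (Real.exp (-ε*τ) * Real.exp (-ε*s)) := by rw [hexp]
          _ = (C * ρ τ * Real.exp (-ε*τ)) * Real.exp (-ε*s) := by ring
      have hIb := int_bound _ _ τ T hτT (hphiint τ T hτT hT0) (hmint (-ε) _ τ T) hpt
      rw [intervalIntegral.integral_const_mul, int_exp (-ε) τ T hεne] at hIb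
      have he2 : Real.exp (-ε*τ) * Real.exp (-ε*τ) = Real.exp (-lam*τ) := by
        rw [← Real.exp_add]; congr 1; linear_combination τ * hlam2
      have hIb2 : |∫ s in τ..T, Real.exp (-lam*s) * (f' s - lam * f s)|
          ≤ C/ε * ρ τ * Real.exp (-lam*τ) := by
        refine hIb.trans ?_
        rw [← he2]
        have heT := Real.exp_pos (-ε*T)
        have h9 : (Real.exp (-ε*T) - Real.exp (-ε*τ)) / (-ε)
            = (Real.exp (-ε*τ) - Real.exp (-ε*T)) / ε := by
          rw [div_neg]
          ring
        rw [h9]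
        have h10 : C * ρ τ * Real.exp (-ε*τ) * ((Real.exp (-ε*τ) - Real.exp (-ε*T)) / ε)
            ≤ C * ρ τ * Real.exp (-ε*τ) * (Real.exp (-ε*τ) / ε) := by
          apply mul_le_mul_of_nonneg_left _ (by positivity)
          exact (div_le_div_iff_of_pos_right hε).mpr (by linarith)
        refine h10.trans (le_of_eq ?_)
        field_simp
      rw [hiden] at hIb2
      have h5 : Real.exp (-lam*τ) * |f τ|
          ≤ Real.exp (-lam*T) * |f T| + C/ε * ρ τ * Real.exp (-lam*τ) := by
        have htri := abs_sub_abs_le_abs_sub (Real.exp (-lam*τ) * f τ) (Real.exp (-lam*T) * f T)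
        rw [abs_mul, abs_mul, abs_of_pos (Real.exp_pos (-lam*τ)),
          abs_of_pos (Real.exp_pos (-lam*T))] at htri
        have habs : |Real.exp (-lam*τ) * f τ - Real.exp (-lam*T) * f T|
            = |Real.exp (-lam*T) * f T - Real.exp (-lam*τ) * f τ| := abs_sub_comm _ _
        rw [habs] at htri
        linarith
      -- homogeneous term bound
      have hr : ρ T ≤ ρ τ * Real.exp (ε*(T-τ)) := (hgron τ T hτT le_rfl).1
      have hρτ' : ρ T * Real.exp (-(ε*(T-τ))) ≤ ρ τ := by
        have := mul_le_mul_of_nonneg_right hr (Real.exp_pos (-(ε*(T-τ)))).le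
        rw [mul_assoc, ← Real.exp_add] at this
        simpa using this
      have hexp2 : Real.exp (-lam*T) ≤ Real.exp (-(ε*(T-τ))) * Real.exp (-lam*τ) := by
        rw [← Real.exp_add]
        apply Real.exp_le_exp.mpr
        nlinarith [mul_nonneg hε.le (sub_nonneg.mpr hτT)]
      have h6 : Real.exp (-lam*T) * |f T| ≤ (|f T| / ρ T) * ρ τ * Real.exp (-lam*τ) := by
        calc Real.exp (-lam*T) * |f T|
            ≤ (Real.exp (-(ε*(T-τ))) * Real.exp (-lam*τ)) * |f T| :=
              mul_le_mul_of_nonneg_right hexp2 hfT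
          _ = (|f T| / ρ T) * (ρ T * Real.exp (-(ε*(T-τ)))) * Real.exp (-lam*τ) := by
              field_simp
          _ ≤ (|f T| / ρ T) * ρ τ * Real.exp (-lam*τ) := by
              apply mul_le_mul_of_nonneg_right _ (Real.exp_pos _).le
              exact mul_le_mul_of_nonneg_left hρτ' (div_nonneg hfT hρT.le)
      have h8 : Real.exp (-lam*τ) * |f τ| ≤ Real.exp (-lam*τ) * (K * ρ τ) := by
        have hKr : (|f T| / ρ T) * ρ τ * Real.exp (-lam*τ) + C/ε * ρ τ * Real.exp (-lam*τ)
            = Real.exp (-lam*τ) * (K * ρ τ) := by rw [hKdef]; ring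
        calc Real.exp (-lam*τ) * |f τ|
            ≤ Real.exp (-lam*T) * |f T| + C/ε * ρ τ * Real.exp (-lam*τ) := h5
          _ ≤ (|f T| / ρ T) * ρ τ * Real.exp (-lam*τ) + C/ε * ρ τ * Real.exp (-lam*τ) := by
              linarith
          _ = Real.exp (-lam*τ) * (K * ρ τ) := hKr
      exact le_of_mul_le_mul_left h8 (Real.exp_pos _)
    exact ⟨K, hKpos, by filter_upwards [eventually_le_atBot T] with τ hτ using key τ hτ⟩
end

section
/- Suppose f and ρ > 0 are C¹ functions on (-∞,0] with f(τ) → 0 and ρ(τ) → 0 as τ → -∞, satisfying ∂_τ f = λ f - μ ρ + O(ρ²) and ∂_τ ρ = O(ρ²), where λ ≠ 0 and μ are constants. Then either ρ(τ) ≲ e^{δτ} for some δ > 0 and τ negative enough, or f = λ^{-1} μ ρ + O(ρ²) as τ → -∞. -/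
open Real Set Filter Topology

private lemma aux_int (F : ℝ → ℝ) {σ τ D k : ℝ} (hστ : σ ≤ τ) (hk : k ≠ 0)
    (hF : ContinuousOn F (Icc σ τ))
    (hb : ∀ s ∈ Icc σ τ, |F s| ≤ D * Real.exp (k * s)) :
    |∫ s in σ..τ, F s| ≤ D / k * (Real.exp (k * τ) - Real.exp (k * σ)) := by
  have hFi : IntervalIntegrable F MeasureTheory.volume σ τ := by
    apply ContinuousOn.intervalIntegrable
    rwa [uIcc_of_le hστ]
  have hgi : IntervalIntegrable (fun s => D * Real.exp (k * s)) MeasureTheory.volume σ τ := by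
    apply ContinuousOn.intervalIntegrable
    fun_prop
  have h1 : |∫ s in σ..τ, F s| ≤ ∫ s in σ..τ, |F s| := by
    simpa [Real.norm_eq_abs] using
      intervalIntegral.norm_integral_le_integral_norm (f := F) (a := σ) (b := τ) hστ
  have h2 : (∫ s in σ..τ, |F s|) ≤ ∫ s in σ..τ, D * Real.exp (k * s) :=
    intervalIntegral.integral_mono_on hστ hFi.abs hgi hb
  have h3 : (∫ s in σ..τ, D * Real.exp (k * s)) = D / k * (Real.exp (k * τ) - Real.exp (k * σ)) := by
    have hd : ∀ s ∈ uIcc σ τ, HasDerivAt (fun s => D / k * Real.exp (k * s))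
        (D * Real.exp (k * s)) s := by
      intro s _
      have h : HasDerivAt (fun s => D / k * Real.exp (k * s)) (D / k * (Real.exp (k * s) * (k * 1))) s :=
        (((hasDerivAt_id s).const_mul k).exp).const_mul (D / k)
      convert h using 1
      field_simp
    rw [intervalIntegral.integral_eq_sub_of_hasDerivAt hd hgi]
    ring
  linarith

private lemma aux_neg (F : ℝ → ℝ) {σ τ D k : ℝ} (hστ : σ ≤ τ) (hk : k < 0) (hD : 0 ≤ D)
    (hF : ContinuousOn F (Icc σ τ))
    (hb : ∀ s ∈ Icc σ τ, |F s| ≤ D * Real.exp (k * s)) :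
    |∫ s in σ..τ, F s| ≤ D * Real.exp (k * σ) / (-k) := by
  have h := aux_int F hστ hk.ne hF hb
  have e1 : (0:ℝ) < Real.exp (k * τ) := Real.exp_pos _
  have hnk : (0:ℝ) < -k := by linarith
  have e2 : D / k * (Real.exp (k * τ) - Real.exp (k * σ))
      = D * (Real.exp (k * σ) - Real.exp (k * τ)) / (-k) := by
    rw [div_mul_eq_mul_div, div_eq_div_iff hk.ne (by linarith : (-k) ≠ 0)]
    ring
  rw [e2] at h
  refine h.trans ?_
  gcongr
  nlinarith [mul_nonneg hD e1.le]

private lemma aux_pos (F : ℝ → ℝ) {σ τ D k : ℝ} (hστ : σ ≤ τ) (hk : 0 < k) (hD : 0 ≤ D)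
    (hF : ContinuousOn F (Icc σ τ))
    (hb : ∀ s ∈ Icc σ τ, |F s| ≤ D * Real.exp (k * s)) :
    |∫ s in σ..τ, F s| ≤ D * Real.exp (k * τ) / k := by
  have h := aux_int F hστ hk.ne' hF hb
  have e1 : (0:ℝ) < Real.exp (k * σ) := Real.exp_pos _
  refine h.trans ?_
  rw [div_mul_eq_mul_div]
  gcongr
  nlinarith [mul_nonneg hD e1.le]

set_option maxHeartbeats 2000000 in
/-- ODE lemma (`lem:frho-2nd`): if `f' = λ f - μ ρ + O(ρ²)` and `ρ' = O(ρ²)` with `ρ > 0`,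
both `f` and `ρ` tending to `0` at `-∞`, and `λ ≠ 0`, then either `ρ ≲ e^{δτ}` for some
`δ > 0` and `τ` negative enough, or `f = λ⁻¹ μ ρ + O(ρ²)` as `τ → -∞`. -/
theorem stmt6 (f ρ f' ρ' : ℝ → ℝ) (lam μ : ℝ) (hlam : lam ≠ 0)
    (hρpos : ∀ τ ≤ (0:ℝ), 0 < ρ τ)
    (hf : ∀ τ ≤ (0:ℝ), HasDerivAt f (f' τ) τ)
    (hρ : ∀ τ ≤ (0:ℝ), HasDerivAt ρ (ρ' τ) τ)
    (hf'c : ContinuousOn f' (Iic 0)) (hρ'c : ContinuousOn ρ' (Iic 0))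
    (hf0 : Tendsto f atBot (nhds 0)) (hρ0 : Tendsto ρ atBot (nhds 0))
    (hO : ∃ C : ℝ, ∀ᶠ τ in atBot, |f' τ - (lam * f τ - μ * ρ τ)| ≤ C * (ρ τ)^2)
    (hρO : ∃ C : ℝ, ∀ᶠ τ in atBot, |ρ' τ| ≤ C * (ρ τ)^2) :
    (∃ δ > (0:ℝ), ∃ C > (0:ℝ), ∀ᶠ τ in atBot, ρ τ ≤ C * Real.exp (δ * τ)) ∨
      (∃ C > (0:ℝ), ∀ᶠ τ in atBot, |f τ - lam⁻¹ * μ * ρ τ| ≤ C * (ρ τ)^2) := by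
  right
  obtain ⟨C₀, hC₀⟩ := hO
  obtain ⟨C₁, hC₁⟩ := hρO
  rw [eventually_atBot] at hC₀ hC₁
  obtain ⟨a₀, ha₀⟩ := hC₀
  obtain ⟨a₁, ha₁⟩ := hC₁
  obtain ⟨c, hc⟩ : ∃ c : ℝ, c = lam⁻¹ * μ := ⟨_, rfl⟩
  obtain ⟨g, hgdef⟩ : ∃ g : ℝ → ℝ, g = fun τ => f τ - c * ρ τ := ⟨_, rfl⟩
  obtain ⟨g', hg'def⟩ : ∃ g' : ℝ → ℝ, g' = fun τ => f' τ - c * ρ' τ := ⟨_, rfl⟩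
  have hgd : ∀ τ ≤ (0:ℝ), HasDerivAt g (g' τ) τ := by
    intro τ hτ
    simp only [hgdef, hg'def]
    exact (hf τ hτ).sub ((hρ τ hτ).const_mul c)
  have hgc : ContinuousOn g (Iic 0) := fun τ hτ =>
    ((hgd τ hτ).continuousAt).continuousWithinAt
  obtain ⟨C₁', hC₁'def⟩ : ∃ x : ℝ, x = max |C₁| 1 := ⟨_, rfl⟩
  have hC₁'pos : (0:ℝ) < C₁' := by
    rw [hC₁'def]; exact lt_of_lt_of_le one_pos (le_max_right _ _)
  obtain ⟨C₂, hC₂def⟩ : ∃ x : ℝ, x = |C₀| + |c| * C₁' := ⟨_, rfl⟩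
  have hC₂ : 0 ≤ C₂ := by
    rw [hC₂def]
    have h1 := abs_nonneg C₀
    have h2 := mul_nonneg (abs_nonneg c) hC₁'pos.le
    linarith
  obtain ⟨T₁, hT₁def⟩ : ∃ x : ℝ, x = min a₀ (min a₁ 0) := ⟨_, rfl⟩
  have hT₁0 : T₁ ≤ 0 := by
    rw [hT₁def]; exact le_trans (min_le_right _ _) (min_le_right _ _)
  have hT₁a₀ : T₁ ≤ a₀ := by rw [hT₁def]; exact min_le_left _ _
  have hT₁a₁ : T₁ ≤ a₁ := by
    rw [hT₁def]; exact le_trans (min_le_right _ _) (min_le_left _ _)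
  have hρ'b : ∀ τ ≤ T₁, |ρ' τ| ≤ C₁' * ρ τ ^ 2 := by
    intro τ hτ
    have h1 : |ρ' τ| ≤ C₁ * ρ τ ^ 2 := ha₁ τ (le_trans hτ hT₁a₁)
    have h2 : (0:ℝ) ≤ ρ τ ^ 2 := sq_nonneg _
    have h3 : C₁ ≤ C₁' := by
      rw [hC₁'def]; exact le_trans (le_abs_self _) (le_max_left _ _)
    nlinarith [h1, h2, h3]
  have hlc : lam * c = μ := by
    rw [hc, ← mul_assoc, mul_inv_cancel₀ hlam, one_mul]
  have hh : ∀ τ ≤ T₁, |g' τ - lam * g τ| ≤ C₂ * ρ τ ^ 2 := by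
    intro τ hτ
    have h1 : |f' τ - (lam * f τ - μ * ρ τ)| ≤ C₀ * ρ τ ^ 2 := ha₀ τ (le_trans hτ hT₁a₀)
    have hid : g' τ - lam * g τ = (f' τ - (lam * f τ - μ * ρ τ)) - c * ρ' τ := by
      simp only [hg'def, hgdef]
      rw [← hlc]; ring
    rw [hid]
    have h3 : |(f' τ - (lam * f τ - μ * ρ τ)) - c * ρ' τ|
        ≤ |f' τ - (lam * f τ - μ * ρ τ)| + |c| * |ρ' τ| := by
      rw [← abs_mul]
      exact abs_sub _ _
    have h4 : |ρ' τ| ≤ C₁' * ρ τ ^ 2 := hρ'b τ hτ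
    have h2 : (0:ℝ) ≤ ρ τ ^ 2 := sq_nonneg _
    rw [hC₂def]
    nlinarith [le_abs_self C₀, abs_nonneg c, abs_nonneg (ρ' τ)]
  obtain ⟨L, hLdef⟩ : ∃ x : ℝ, x = |lam| / 4 := ⟨_, rfl⟩
  have hLpos : 0 < L := by
    have := abs_pos.mpr hlam
    rw [hLdef]; linarith
  obtain ⟨ε, hεdef⟩ : ∃ x : ℝ, x = |lam| / (4 * C₁') := ⟨_, rfl⟩
  have hεpos : 0 < ε := by
    rw [hεdef]
    exact div_pos (abs_pos.mpr hlam) (by linarith)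
  obtain ⟨T₀', hT₀'⟩ := eventually_atBot.mp (hρ0.eventually_lt_const hεpos)
  obtain ⟨T₀, hT₀def⟩ : ∃ x : ℝ, x = min T₁ T₀' := ⟨_, rfl⟩
  have hT₀T₁ : T₀ ≤ T₁ := by rw [hT₀def]; exact min_le_left _ _
  have hT₀0 : T₀ ≤ 0 := le_trans hT₀T₁ hT₁0
  have hT₀T₀' : T₀ ≤ T₀' := by rw [hT₀def]; exact min_le_right _ _
  have hρε : ∀ τ ≤ T₀, ρ τ ≤ ε := fun τ hτ =>
    (hT₀' τ (le_trans hτ hT₀T₀')).le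
  -- log-Lipschitz estimate for ρ
  have hlip : ∀ σ τ, σ ≤ τ → τ ≤ T₀ →
      ρ σ ≤ ρ τ * Real.exp (L * (τ - σ)) ∧ ρ τ ≤ ρ σ * Real.exp (L * (τ - σ)) := by
    intro σ τ hστ hτ
    rcases eq_or_lt_of_le hστ with rfl | hlt
    · constructor <;> simp [le_of_eq, (hρpos σ (le_trans hτ hT₀0)).le]
    · have hτ0 : τ ≤ (0:ℝ) := le_trans hτ hT₀0
      have hσ0 : σ ≤ (0:ℝ) := le_trans hlt.le hτ0
      have hcont : ContinuousOn (fun s => Real.log (ρ s)) (Icc σ τ) := by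
        intro s hs
        have hs0 : s ≤ (0:ℝ) := le_trans hs.2 hτ0
        exact (((hρ s hs0).log (ne_of_gt (hρpos s hs0))).continuousAt).continuousWithinAt
      have hderiv : ∀ s ∈ Ioo σ τ, HasDerivAt (fun s => Real.log (ρ s)) (ρ' s / ρ s) s := by
        intro s hs
        have hs0 : s ≤ (0:ℝ) := le_trans hs.2.le hτ0
        exact (hρ s hs0).log (ne_of_gt (hρpos s hs0))
      obtain ⟨ξ, hξmem, hξ⟩ := exists_hasDerivAt_eq_slope _ _ hlt hcont hderiv
      have hξT₀ : ξ ≤ T₀ := le_trans hξmem.2.le hτ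
      have hξz : ξ ≤ (0:ℝ) := le_trans hξT₀ hT₀0
      have hρξ : 0 < ρ ξ := hρpos ξ hξz
      have hb : |ρ' ξ / ρ ξ| ≤ L := by
        rw [abs_div, abs_of_pos hρξ, div_le_iff₀ hρξ]
        have h5 : |ρ' ξ| ≤ C₁' * ρ ξ ^ 2 := hρ'b ξ (le_trans hξT₀ hT₀T₁)
        have h6 : ρ ξ ≤ ε := hρε ξ hξT₀
        have h7 : C₁' * ρ ξ * ε = L * ρ ξ := by
          rw [hεdef, hLdef]
          field_simp [hC₁'pos.ne']
        nlinarith [mul_le_mul_of_nonneg_left h6 (mul_nonneg hC₁'pos.le hρξ.le)]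
      have hslope : |Real.log (ρ τ) - Real.log (ρ σ)| ≤ L * (τ - σ) := by
        have h2 : Real.log (ρ τ) - Real.log (ρ σ) = (ρ' ξ / ρ ξ) * (τ - σ) := by
          rw [hξ, div_mul_cancel₀ _ (sub_ne_zero.mpr hlt.ne')]
        rw [h2, abs_mul, abs_of_pos (sub_pos.mpr hlt)]
        exact mul_le_mul_of_nonneg_right hb (by linarith)
      have habs := abs_le.mp hslope
      constructor
      · calc ρ σ = Real.exp (Real.log (ρ σ)) := (Real.exp_log (hρpos σ hσ0)).symm
        _ ≤ Real.exp (Real.log (ρ τ) + L * (τ - σ)) := Real.exp_le_exp.mpr (by linarith [habs.1])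
        _ = ρ τ * Real.exp (L * (τ - σ)) := by
            rw [Real.exp_add, Real.exp_log (hρpos τ hτ0)]
      · calc ρ τ = Real.exp (Real.log (ρ τ)) := (Real.exp_log (hρpos τ hτ0)).symm
        _ ≤ Real.exp (Real.log (ρ σ) + L * (τ - σ)) := Real.exp_le_exp.mpr (by linarith [habs.2])
        _ = ρ σ * Real.exp (L * (τ - σ)) := by
            rw [Real.exp_add, Real.exp_log (hρpos σ hσ0)]
  -- the integrating factor computation
  have hG : ∀ s ≤ (0:ℝ), HasDerivAt (fun s => Real.exp (-lam * s) * g s)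
      (Real.exp (-lam * s) * (g' s - lam * g s)) s := by
    intro s hs
    have h1 : HasDerivAt (fun s : ℝ => Real.exp (-lam * s)) (Real.exp (-lam * s) * (-lam * 1)) s :=
      ((hasDerivAt_id s).const_mul (-lam)).exp
    have h2 : HasDerivAt (fun s => Real.exp (-lam * s) * g s)
        (Real.exp (-lam * s) * (-lam * 1) * g s + Real.exp (-lam * s) * g' s) s := h1.mul (hgd s hs)
    convert h2 using 1
    ring
  have hcontI : ContinuousOn (fun s => Real.exp (-lam * s) * (g' s - lam * g s)) (Iic 0) := by
    apply ContinuousOn.mul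
    · exact (Real.continuous_exp.comp (continuous_const.mul continuous_id)).continuousOn
    · apply ContinuousOn.sub
      · simp only [hg'def]
        exact hf'c.sub (continuousOn_const.mul hρ'c)
      · exact continuousOn_const.mul hgc
  have hFTC : ∀ σ τ, σ ≤ τ → τ ≤ (0:ℝ) →
      Real.exp (-lam * τ) * g τ - Real.exp (-lam * σ) * g σ
        = ∫ s in σ..τ, Real.exp (-lam * s) * (g' s - lam * g s) := by
    intro σ τ hστ hτ0
    have hsub : uIcc σ τ ⊆ Iic (0:ℝ) := by
      rw [uIcc_of_le hστ]
      exact fun x hx => le_trans hx.2 hτ0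
    exact (intervalIntegral.integral_eq_sub_of_hasDerivAt
      (fun s hs => hG s (hsub hs)) ((hcontI.mono hsub).intervalIntegrable)).symm
  -- now split according to the sign of lam
  rcases hlam.lt_or_gt with hneg | hpos
  · -- lam < 0
    have h2L : 2 * L = -lam / 2 := by
      rw [hLdef, abs_of_neg hneg]; ring
    have hKpos : (0:ℝ) < 1 + 2 * C₂ / (-lam) := by
      have := div_nonneg (by linarith : (0:ℝ) ≤ 2 * C₂) (by linarith : (0:ℝ) ≤ -lam)
      linarith
    refine ⟨1 + 2 * C₂ / (-lam), hKpos, eventually_atBot.mpr ⟨T₀, fun τ hτ => ?_⟩⟩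
    have hτ0 : τ ≤ (0:ℝ) := le_trans hτ hT₀0
    have hρτ : 0 < ρ τ := hρpos τ hτ0
    obtain ⟨k, hkdef⟩ : ∃ x : ℝ, x = -(lam / 2) := ⟨_, rfl⟩
    have hkpos : 0 < k := by rw [hkdef]; linarith
    obtain ⟨D, hDdef⟩ : ∃ x : ℝ, x = C₂ * ρ τ ^ 2 * Real.exp (2 * L * τ) := ⟨_, rfl⟩
    have hDnn : 0 ≤ D := by
      rw [hDdef]
      exact mul_nonneg (mul_nonneg hC₂ (sq_nonneg _)) (Real.exp_pos _).le
    -- bound for integrand on (-∞, τ]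
    have hbnd : ∀ σ, σ ≤ τ → ∀ s ∈ Icc σ τ,
        |Real.exp (-lam * s) * (g' s - lam * g s)| ≤ D * Real.exp (k * s) := by
      intro σ hστ s hs
      have hsT₀ : s ≤ T₀ := le_trans hs.2 hτ
      have hs0 : s ≤ (0:ℝ) := le_trans hsT₀ hT₀0
      have h1 : |g' s - lam * g s| ≤ C₂ * ρ s ^ 2 := hh s (le_trans hsT₀ hT₀T₁)
      have h2 : ρ s ≤ ρ τ * Real.exp (L * (τ - s)) := (hlip s τ hs.2 hτ).1
      have h3 : ρ s ^ 2 ≤ ρ τ ^ 2 * Real.exp (L * (τ - s)) ^ 2 := by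
        nlinarith [(hρpos s hs0).le, (Real.exp_pos (L * (τ - s))).le]
      have hexp : Real.exp (L * (τ - s)) ^ 2 * Real.exp (-lam * s)
          = Real.exp (2 * L * τ) * Real.exp (k * s) := by
        rw [sq, ← Real.exp_add, ← Real.exp_add, ← Real.exp_add]
        congr 1
        rw [hkdef]
        linear_combination (-s) * h2L
      rw [abs_mul, abs_of_pos (Real.exp_pos _)]
      calc Real.exp (-lam * s) * |g' s - lam * g s|
          ≤ Real.exp (-lam * s) * (C₂ * ρ s ^ 2) :=
            mul_le_mul_of_nonneg_left h1 (Real.exp_pos _).le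
        _ ≤ Real.exp (-lam * s) * (C₂ * (ρ τ ^ 2 * Real.exp (L * (τ - s)) ^ 2)) :=
            mul_le_mul_of_nonneg_left (mul_le_mul_of_nonneg_left h3 hC₂) (Real.exp_pos _).le
        _ = C₂ * ρ τ ^ 2 * (Real.exp (L * (τ - s)) ^ 2 * Real.exp (-lam * s)) := by ring
        _ = D * Real.exp (k * s) := by rw [hexp, hDdef]; ring
    -- the integral bound
    have hIb : ∀ σ, σ ≤ τ →
        |∫ s in σ..τ, Real.exp (-lam * s) * (g' s - lam * g s)|
          ≤ 2 * C₂ / (-lam) * (ρ τ ^ 2 * Real.exp (-lam * τ)) := by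
      intro σ hστ
      have hsub : Icc σ τ ⊆ Iic (0:ℝ) := fun x hx => le_trans hx.2 hτ0
      have h := aux_pos _ hστ hkpos hDnn (hcontI.mono hsub) (hbnd σ hστ)
      refine h.trans (le_of_eq ?_)
      have hexp2 : Real.exp (2 * L * τ) * Real.exp (-(lam / 2) * τ) = Real.exp (-lam * τ) := by
        rw [← Real.exp_add]
        congr 1
        linear_combination τ * h2L
      rw [hDdef, hkdef, ← hexp2]
      field_simp
    -- choose σ far to the left
    have hg0 : Tendsto (fun σ => |g σ|) atBot (nhds 0) := by
      have h : Tendsto (fun x => f x - c * ρ x) atBot (nhds (0 - c * 0)) :=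
        hf0.sub (hρ0.const_mul c)
      rw [hgdef]
      simpa using h.abs
    have hexp0 : Tendsto (fun σ : ℝ => Real.exp (-lam * σ)) atBot (nhds 0) := by
      apply Real.tendsto_exp_atBot.comp
      exact Tendsto.const_mul_atBot (by linarith : (0:ℝ) < -lam) tendsto_id
    have hTend : Tendsto (fun σ => Real.exp (lam * τ) * (Real.exp (-lam * σ) * |g σ|))
        atBot (nhds 0) := by
      have h := (hexp0.mul hg0).const_mul (Real.exp (lam * τ))
      simpa using h
    obtain ⟨σ, hσb, hστ'⟩ :=
      ((hTend.eventually_lt_const (by positivity : (0:ℝ) < ρ τ ^ 2)).and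
        (eventually_le_atBot τ)).exists
    -- put it together
    have hid := hFTC σ τ hστ' hτ0
    have e2 : Real.exp (lam * τ) * Real.exp (-lam * τ) = 1 := by
      rw [← Real.exp_add]
      norm_num
    have h7 : Real.exp (-lam * τ) * |g τ|
        ≤ Real.exp (-lam * σ) * |g σ| + 2 * C₂ / (-lam) * (ρ τ ^ 2 * Real.exp (-lam * τ)) := by
      have e1 : Real.exp (-lam * τ) * g τ = Real.exp (-lam * σ) * g σ
          + ∫ s in σ..τ, Real.exp (-lam * s) * (g' s - lam * g s) := by linarith [hid]
      calc Real.exp (-lam * τ) * |g τ| = |Real.exp (-lam * τ) * g τ| := by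
            rw [abs_mul, abs_of_pos (Real.exp_pos _)]
        _ ≤ |Real.exp (-lam * σ) * g σ|
            + |∫ s in σ..τ, Real.exp (-lam * s) * (g' s - lam * g s)| := by
            rw [e1]; exact abs_add_le _ _
        _ ≤ Real.exp (-lam * σ) * |g σ|
            + 2 * C₂ / (-lam) * (ρ τ ^ 2 * Real.exp (-lam * τ)) := by
            rw [abs_mul, abs_of_pos (Real.exp_pos _)]
            linarith [hIb σ hστ']
    have h8 : |g τ| ≤ Real.exp (lam * τ) * (Real.exp (-lam * σ) * |g σ|)
        + 2 * C₂ / (-lam) * ρ τ ^ 2 := by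
      calc |g τ| = Real.exp (lam * τ) * (Real.exp (-lam * τ) * |g τ|) := by
            rw [← mul_assoc, e2, one_mul]
        _ ≤ Real.exp (lam * τ) * (Real.exp (-lam * σ) * |g σ|
            + 2 * C₂ / (-lam) * (ρ τ ^ 2 * Real.exp (-lam * τ))) :=
            mul_le_mul_of_nonneg_left h7 (Real.exp_pos _).le
        _ = Real.exp (lam * τ) * (Real.exp (-lam * σ) * |g σ|)
            + 2 * C₂ / (-lam) * ρ τ ^ 2 * (Real.exp (lam * τ) * Real.exp (-lam * τ)) := by ring
        _ = _ := by rw [e2]; ring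
    have : |f τ - lam⁻¹ * μ * ρ τ| = |g τ| := by
      simp only [hgdef, hc]
    rw [this]
    nlinarith [h8, hσb.le]
  · -- lam > 0
    have h2L : 2 * L = lam / 2 := by
      rw [hLdef, abs_of_pos hpos]; ring
    have hρT₀ : 0 < ρ T₀ := hρpos T₀ hT₀0
    have hKpos : (0:ℝ) < |g T₀| / ρ T₀ ^ 2 + 2 * C₂ / lam + 1 := by
      have h1 : 0 ≤ |g T₀| / ρ T₀ ^ 2 := div_nonneg (abs_nonneg _) (sq_nonneg _)
      have h2 : 0 ≤ 2 * C₂ / lam := div_nonneg (by linarith) hpos.le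
      linarith
    refine ⟨|g T₀| / ρ T₀ ^ 2 + 2 * C₂ / lam + 1, hKpos,
      eventually_atBot.mpr ⟨T₀, fun τ hτ => ?_⟩⟩
    have hτ0 : τ ≤ (0:ℝ) := le_trans hτ hT₀0
    have hρτ : 0 < ρ τ := hρpos τ hτ0
    set k : ℝ := -(lam / 2) with hkdef
    have hkneg : k < 0 := by rw [hkdef]; linarith
    set D : ℝ := C₂ * ρ τ ^ 2 * Real.exp (-(2 * L) * τ) with hDdef
    have hDnn : 0 ≤ D := by rw [hDdef]; positivity
    have hbnd : ∀ s ∈ Icc τ T₀,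
        |Real.exp (-lam * s) * (g' s - lam * g s)| ≤ D * Real.exp (k * s) := by
      intro s hs
      have hsT₀ : s ≤ T₀ := hs.2
      have hs0 : s ≤ (0:ℝ) := le_trans hsT₀ hT₀0
      have h1 : |g' s - lam * g s| ≤ C₂ * ρ s ^ 2 := hh s (le_trans hsT₀ hT₀T₁)
      have h2 : ρ s ≤ ρ τ * Real.exp (L * (s - τ)) := (hlip τ s hs.1 hsT₀).2
      have h3 : ρ s ^ 2 ≤ ρ τ ^ 2 * Real.exp (L * (s - τ)) ^ 2 := by
        nlinarith [(hρpos s hs0).le, (Real.exp_pos (L * (s - τ))).le]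
      have hexp : Real.exp (L * (s - τ)) ^ 2 * Real.exp (-lam * s)
          = Real.exp (-(2 * L) * τ) * Real.exp (k * s) := by
        rw [sq, ← Real.exp_add, ← Real.exp_add, ← Real.exp_add]
        congr 1
        rw [hkdef]
        linear_combination s * h2L
      rw [abs_mul, abs_of_pos (Real.exp_pos _)]
      calc Real.exp (-lam * s) * |g' s - lam * g s|
          ≤ Real.exp (-lam * s) * (C₂ * ρ s ^ 2) :=
            mul_le_mul_of_nonneg_left h1 (Real.exp_pos _).le
        _ ≤ Real.exp (-lam * s) * (C₂ * (ρ τ ^ 2 * Real.exp (L * (s - τ)) ^ 2)) :=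
            mul_le_mul_of_nonneg_left (mul_le_mul_of_nonneg_left h3 hC₂) (Real.exp_pos _).le
        _ = C₂ * ρ τ ^ 2 * (Real.exp (L * (s - τ)) ^ 2 * Real.exp (-lam * s)) := by ring
        _ = D * Real.exp (k * s) := by rw [hexp, hDdef]; ring
    have hsub : Icc τ T₀ ⊆ Iic (0:ℝ) := fun x hx => le_trans hx.2 hT₀0
    have hIb : |∫ s in τ..T₀, Real.exp (-lam * s) * (g' s - lam * g s)|
        ≤ 2 * C₂ / lam * (ρ τ ^ 2 * Real.exp (-lam * τ)) := by
      have h := aux_neg _ hτ hkneg hDnn (hcontI.mono hsub) hbnd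
      refine h.trans (le_of_eq ?_)
      have hexp2 : Real.exp (-(2 * L) * τ) * Real.exp (-(lam / 2) * τ) = Real.exp (-lam * τ) := by
        rw [← Real.exp_add]
        congr 1
        linear_combination (-τ) * h2L
      rw [hDdef, hkdef, neg_neg, ← hexp2]
      field_simp
    have hid := hFTC τ T₀ hτ hT₀0
    have e2 : Real.exp (lam * τ) * Real.exp (-lam * τ) = 1 := by
      rw [← Real.exp_add]
      norm_num
    have h7 : Real.exp (-lam * τ) * |g τ|
        ≤ Real.exp (-lam * T₀) * |g T₀| + 2 * C₂ / lam * (ρ τ ^ 2 * Real.exp (-lam * τ)) := by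
      have e1 : Real.exp (-lam * τ) * g τ = Real.exp (-lam * T₀) * g T₀
          - ∫ s in τ..T₀, Real.exp (-lam * s) * (g' s - lam * g s) := by linarith [hid]
      calc Real.exp (-lam * τ) * |g τ| = |Real.exp (-lam * τ) * g τ| := by
            rw [abs_mul, abs_of_pos (Real.exp_pos _)]
        _ ≤ |Real.exp (-lam * T₀) * g T₀|
            + |∫ s in τ..T₀, Real.exp (-lam * s) * (g' s - lam * g s)| := by
            rw [e1]; exact abs_sub _ _
        _ ≤ Real.exp (-lam * T₀) * |g T₀|
            + 2 * C₂ / lam * (ρ τ ^ 2 * Real.exp (-lam * τ)) := by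
            rw [abs_mul, abs_of_pos (Real.exp_pos _)]
            linarith [hIb]
    have h8 : |g τ| ≤ Real.exp (lam * τ) * (Real.exp (-lam * T₀) * |g T₀|)
        + 2 * C₂ / lam * ρ τ ^ 2 := by
      calc |g τ| = Real.exp (lam * τ) * (Real.exp (-lam * τ) * |g τ|) := by
            rw [← mul_assoc, e2, one_mul]
        _ ≤ Real.exp (lam * τ) * (Real.exp (-lam * T₀) * |g T₀|
            + 2 * C₂ / lam * (ρ τ ^ 2 * Real.exp (-lam * τ))) :=
            mul_le_mul_of_nonneg_left h7 (Real.exp_pos _).le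
        _ = Real.exp (lam * τ) * (Real.exp (-lam * T₀) * |g T₀|)
            + 2 * C₂ / lam * ρ τ ^ 2 * (Real.exp (lam * τ) * Real.exp (-lam * τ)) := by ring
        _ = _ := by rw [e2]; ring
    -- bound the boundary term
    have hlip2 : ρ T₀ ≤ ρ τ * Real.exp (L * (T₀ - τ)) := (hlip τ T₀ hτ le_rfl).2
    have h10 : ρ T₀ ^ 2 ≤ ρ τ ^ 2 * Real.exp (L * (T₀ - τ)) ^ 2 := by
      nlinarith [hρT₀.le, (Real.exp_pos (L * (T₀ - τ))).le]
    have h11 : Real.exp (lam * τ) * Real.exp (-lam * T₀) * Real.exp (L * (T₀ - τ)) ^ 2 ≤ 1 := by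
      rw [sq, ← Real.exp_add, ← Real.exp_add, ← Real.exp_add]
      rw [Real.exp_le_one_iff]
      nlinarith [h2L, hτ, mul_nonneg hpos.le (sub_nonneg.mpr hτ)]
    have hbd : Real.exp (lam * τ) * Real.exp (-lam * T₀) * ρ T₀ ^ 2 ≤ ρ τ ^ 2 := by
      have e3 : 0 < Real.exp (lam * τ) * Real.exp (-lam * T₀) := by positivity
      nlinarith [mul_le_mul_of_nonneg_left h10 e3.le,
        mul_le_mul_of_nonneg_left h11 (sq_nonneg (ρ τ))]
    have h12 : Real.exp (lam * τ) * (Real.exp (-lam * T₀) * |g T₀|)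
        ≤ |g T₀| / ρ T₀ ^ 2 * ρ τ ^ 2 := by
      rw [div_mul_eq_mul_div, le_div_iff₀ (by positivity : (0:ℝ) < ρ T₀ ^ 2)]
      nlinarith [mul_le_mul_of_nonneg_left hbd (abs_nonneg (g T₀))]
    have : |f τ - lam⁻¹ * μ * ρ τ| = |g τ| := by
      simp only [hgdef, hc]
    rw [this]
    nlinarith [h8, h12, sq_nonneg (ρ τ)]
end

section
/- Let α ∈ (0,1), and let U > 0 solve U'' + U = U^{-1/α} on [0,Θ] with U'(0) = U'(Θ) = 0, and let C be the constant value of U'² + U² + (2α/(1-α)) U^{1-1/α}. Then C - ((1+α)/(1-α)) · (1/Θ)∫_0^Θ U^{1-1/α} dθ = (2/Θ) ∫_0^Θ (U')² dθ ≥ 0. -/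
open Real Set

/-- With `U'' + U = U^{-1/α}` on `[0,Θ]`, Neumann conditions `U'(0) = U'(Θ) = 0`, and `C`
the first-integral constant of `U'² + U² + (2α/(1-α))U^{1-1/α}`:
`C - ((1+α)/(1-α)) ⨍₀^Θ U^{1-1/α} = (2/Θ) ∫₀^Θ U'² ≥ 0`. -/
theorem stmt14 (α Θ C : ℝ) (hα : α ∈ Set.Ioo (0:ℝ) 1) (hΘ : 0 < Θ)
    (U U' : ℝ → ℝ)
    (hpos : ∀ θ ∈ Icc 0 Θ, 0 < U θ)
    (hU : ∀ θ ∈ Icc 0 Θ, HasDerivAt U (U' θ) θ)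
    (hU'' : ∀ θ ∈ Icc 0 Θ, HasDerivAt U' ((U θ) ^ (-(1/α)) - U θ) θ)
    (hU'0 : U' 0 = 0) (hU'Θ : U' Θ = 0)
    (hC : ∀ θ ∈ Icc 0 Θ,
      (U' θ)^2 + (U θ)^2 + (2*α/(1-α)) * (U θ) ^ (1 - 1/α) = C) :
    C - ((1+α)/(1-α)) * ((1/Θ) * ∫ θ in (0:ℝ)..Θ, (U θ) ^ (1 - 1/α))
        = (2/Θ) * ∫ θ in (0:ℝ)..Θ, (U' θ)^2 ∧
    0 ≤ (2/Θ) * ∫ θ in (0:ℝ)..Θ, (U' θ)^2 := by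
  have huIcc : uIcc (0:ℝ) Θ = Icc 0 Θ := uIcc_of_le hΘ.le
  have hUc : ContinuousOn U (Icc 0 Θ) := fun θ hθ =>
    (hU θ hθ).continuousAt.continuousWithinAt
  have hU'c : ContinuousOn U' (Icc 0 Θ) := fun θ hθ =>
    (hU'' θ hθ).continuousAt.continuousWithinAt
  have hWc : ContinuousOn (fun θ => (U θ) ^ (1 - 1/α)) (Icc 0 Θ) :=
    hUc.rpow_const (fun θ hθ => Or.inl (hpos θ hθ).ne')
  have hIA : IntervalIntegrable (fun θ => (U' θ)^2) MeasureTheory.volume 0 Θ :=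
    ((hU'c.mul hU'c).congr (by intro x hx; simp [sq])).intervalIntegrable_of_Icc hΘ.le
  have hIB : IntervalIntegrable (fun θ => (U θ)^2) MeasureTheory.volume 0 Θ :=
    ((hUc.mul hUc).congr (by intro x hx; simp [sq])).intervalIntegrable_of_Icc hΘ.le
  have hIW : IntervalIntegrable (fun θ => (U θ) ^ (1 - 1/α)) MeasureTheory.volume 0 Θ :=
    hWc.intervalIntegrable_of_Icc hΘ.le
  set A := ∫ θ in (0:ℝ)..Θ, (U' θ)^2 with hA
  set B := ∫ θ in (0:ℝ)..Θ, (U θ)^2 with hB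
  set W := ∫ θ in (0:ℝ)..Θ, (U θ) ^ (1 - 1/α) with hW
  -- integration by parts
  have hparts : (∫ θ in (0:ℝ)..Θ, U θ * ((U θ) ^ (-(1/α)) - U θ))
      = U Θ * U' Θ - U 0 * U' 0 - ∫ θ in (0:ℝ)..Θ, U' θ * U' θ := by
    apply intervalIntegral.integral_mul_deriv_eq_deriv_mul
    · intro x hx; exact hU x (huIcc ▸ hx)
    · intro x hx; exact hU'' x (huIcc ▸ hx)
    · exact hU'c.intervalIntegrable_of_Icc hΘ.le
    · exact ((hUc.rpow_const (fun θ hθ => Or.inl (hpos θ hθ).ne')).sub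
        hUc).intervalIntegrable_of_Icc hΘ.le
  have hB_eq : B = A + W := by
    have h1 : (∫ θ in (0:ℝ)..Θ, U θ * ((U θ) ^ (-(1/α)) - U θ))
        = W - B := by
      rw [hW, hB, ← intervalIntegral.integral_sub hIW hIB]
      apply intervalIntegral.integral_congr
      intro x hx
      have hx' := hpos x (huIcc ▸ hx)
      have key : U x * (U x) ^ (-(1/α)) = (U x) ^ (1 - 1/α) := by
        rw [show (1:ℝ) - 1/α = 1 + -(1/α) by ring, Real.rpow_add hx', Real.rpow_one]
      simp only [mul_sub]
      rw [key]; ring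
    have h2 : (∫ θ in (0:ℝ)..Θ, U' θ * U' θ) = A := by
      rw [hA]; apply intervalIntegral.integral_congr; intro x hx; simp [sq]
    rw [h1, h2, hU'0, hU'Θ] at hparts
    linarith
  -- integrate the first-integral identity
  have hCint : A + B + (2*α/(1-α)) * W = C * Θ := by
    have : (∫ θ in (0:ℝ)..Θ, ((U' θ)^2 + (U θ)^2 + (2*α/(1-α)) * (U θ) ^ (1 - 1/α)))
        = ∫ θ in (0:ℝ)..Θ, C := by
      apply intervalIntegral.integral_congr
      intro x hx; exact hC x (huIcc ▸ hx)
    rw [intervalIntegral.integral_add (hIA.add hIB) (hIW.const_mul _),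
      intervalIntegral.integral_add hIA hIB,
      intervalIntegral.integral_const_mul, intervalIntegral.integral_const] at this
    rw [← hA, ← hB, ← hW] at this
    simp at this
    linarith [this]
  have hαne : (1:ℝ) - α ≠ 0 := by have := hα.2; linarith
  have hAnn : 0 ≤ A := by
    rw [hA]
    exact intervalIntegral.integral_nonneg hΘ.le (fun θ _ => sq_nonneg _)
  constructor
  · rw [hB_eq] at hCint
    have hΘne : Θ ≠ 0 := hΘ.ne'
    have hCint2 : 2*A*(1-α) + (1+α)*W = C*Θ*(1-α) := by
      field_simp at hCint
      linarith
    field_simp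
    linear_combination (-1) * hCint2
  · positivity
end

section
/- Suppose ρ : (-∞,0] → [0,∞) is absolutely continuous, ρ(τ) → 0 as τ → -∞, and |∂_τ ρ| ≤ C ρ^{3/2} for some constant C > 0. If ρ(τ₀) > 0 for some τ₀, then ρ(τ) > 0 for all τ, and ρ(τ) ≥ c(1 + |τ|)^{-2} for all τ ≤ τ₀ and some constant c > 0; in particular ∫_{-∞}^0 √(ρ(τ)) dτ = +∞. -/
open Real Set Filter Topology MeasureTheory

/-- Comparison lemma: if `|f'| ≤ C f^{3/2}` on `[a,b]` and `f a > 0`, then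
`f t ≥ ((√(f a))⁻¹ + C (t-a))⁻²` on `[a,b]`. -/
lemma stmt15_helper {f f' : ℝ → ℝ} {C a b : ℝ} (hC : 0 < C)
    (hd : ∀ t ∈ Icc a b, HasDerivAt f (f' t) t)
    (hineq : ∀ t ∈ Icc a b, |f' t| ≤ C * f t ^ ((3:ℝ)/2))
    (hpos : 0 < f a) :
    ∀ t ∈ Icc a b, (((Real.sqrt (f a))⁻¹ + C * (t - a)) ^ 2)⁻¹ ≤ f t := by
  set g0 : ℝ := (Real.sqrt (f a))⁻¹ with hg0def
  have hg0 : 0 < g0 := inv_pos.2 (Real.sqrt_pos.2 hpos)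
  have hfa : (g0 ^ 2)⁻¹ = f a := by
    rw [hg0def, inv_pow, inv_inv, Real.sq_sqrt hpos.le]
  set u : ℝ → ℝ := fun t => g0 + C * (t - a) with hudef
  have hu : ∀ t, a ≤ t → 0 < u t := fun t ht =>
    add_pos_of_pos_of_nonneg hg0 (mul_nonneg hC.le (sub_nonneg.2 ht))
  have hderivu : ∀ t, HasDerivAt u C t := by
    intro t
    have h := (((hasDerivAt_id t).sub_const a).const_mul C).const_add g0
    rw [mul_one] at h
    exact h
  have hB' : ∀ x, 0 < u x → HasDerivAt (fun t => -((u t) ^ 2)⁻¹) (2 * C * ((u x) ^ 3)⁻¹) x := by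
    intro x hx
    have h1 : HasDerivAt (fun t => (u t) ^ 2) (2 * u x * C) x := by
      have := (hderivu x).pow 2
      refine this.congr_deriv ?_
      ring
    have h2 := (h1.inv (by positivity)).neg
    refine h2.congr_deriv ?_
    have hx0 : u x ≠ 0 := hx.ne'
    field_simp
  intro t ht
  have key : ∀ ⦃x⦄, x ∈ Icc a b → -f x ≤ -((u x) ^ 2)⁻¹ := by
    refine image_le_of_deriv_right_lt_deriv_boundary'
      (f := fun s => -f s) (f' := fun s => -f' s)
      (B := fun s => -((u s) ^ 2)⁻¹) (B' := fun s => 2 * C * ((u s) ^ 3)⁻¹)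
      (fun s hs => ((hd s hs).neg).continuousAt.continuousWithinAt)
      (fun s hs => ((hd s (Ico_subset_Icc_self hs)).neg).hasDerivWithinAt)
      ?_ ?_ (fun s hs => (hB' s (hu s hs.1)).hasDerivWithinAt) ?_
    · show -f a ≤ -((u a) ^ 2)⁻¹
      have : u a = g0 := by simp [hudef]
      rw [this, hfa]
    · refine (((continuousOn_const.add ((continuousOn_id.sub continuousOn_const).const_smul C)).pow 2).inv₀ ?_).neg
      intro s hs
      have := hu s hs.1
      show (u s) ^ 2 ≠ 0
      positivity
    · intro s hs heq
      have hus := hu s hs.1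
      have hfs : f s = ((u s) ^ 2)⁻¹ := by linarith [neg_injective heq]
      have h32 : f s ^ ((3:ℝ)/2) = ((u s) ^ 3)⁻¹ := by
        rw [hfs]
        have e1 : ((u s) ^ 2)⁻¹ = (u s) ^ (-2 : ℝ) := by
          rw [Real.rpow_neg hus.le, show ((2:ℝ)) = ((2:ℕ):ℝ) by norm_num,
            Real.rpow_natCast]
        have e2 : ((u s) ^ 3)⁻¹ = (u s) ^ (-3 : ℝ) := by
          rw [Real.rpow_neg hus.le, show ((3:ℝ)) = ((3:ℕ):ℝ) by norm_num,
            Real.rpow_natCast]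
        rw [e1, e2, ← Real.rpow_mul hus.le]
        norm_num
      have h3 : -f' s ≤ C * ((u s) ^ 3)⁻¹ := by
        calc -f' s ≤ |f' s| := neg_le_abs _
          _ ≤ C * f s ^ ((3:ℝ)/2) := hineq s (Ico_subset_Icc_self hs)
          _ = C * ((u s) ^ 3)⁻¹ := by rw [h32]
      have h4 : 0 < C * ((u s) ^ 3)⁻¹ := by positivity
      calc -f' s ≤ C * ((u s) ^ 3)⁻¹ := h3
        _ < 2 * C * ((u s) ^ 3)⁻¹ := by nlinarith
  have := key ht
  linarith

/-- Lemma `lem:nonint-rho`-type statement: if `ρ ≥ 0` is absolutely continuous on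
`(-∞,0]`, `ρ → 0` at `-∞`, `|ρ'| ≤ C ρ^{3/2}`, and `ρ(τ₀) > 0`, then `ρ > 0` everywhere,
`ρ(τ) ≥ c (1+|τ|)⁻²` for `τ ≤ τ₀`, and `√ρ` is not integrable on `(-∞,0)`. -/
theorem stmt15 (ρ ρ' : ℝ → ℝ) (C τ₀ : ℝ) (hC : 0 < C)
    (hnn : ∀ τ ≤ (0:ℝ), 0 ≤ ρ τ)
    (hd : ∀ τ ≤ (0:ℝ), HasDerivAt ρ (ρ' τ) τ)
    (h0 : Tendsto ρ atBot (nhds 0))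
    (hineq : ∀ τ ≤ (0:ℝ), |ρ' τ| ≤ C * (ρ τ) ^ ((3:ℝ)/2))
    (hτ₀ : τ₀ ≤ 0) (hposτ₀ : 0 < ρ τ₀) :
    (∀ τ ≤ (0:ℝ), 0 < ρ τ) ∧
    (∃ c > (0:ℝ), ∀ τ ≤ τ₀, c * (1 + |τ|) ^ (-(2:ℝ)) ≤ ρ τ) ∧
    ¬ IntegrableOn (fun τ => Real.sqrt (ρ τ)) (Set.Iio 0) := by
  set g0 : ℝ := (Real.sqrt (ρ τ₀))⁻¹ with hg0def
  have hg0 : 0 < g0 := inv_pos.2 (Real.sqrt_pos.2 hposτ₀)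
  -- bound for τ ≤ τ₀ (time reversal)
  have hb1 : ∀ τ ≤ τ₀, ((g0 + C * (τ₀ - τ)) ^ 2)⁻¹ ≤ ρ τ := by
    intro τ hτ
    have hres := stmt15_helper (f := fun t => ρ (τ + τ₀ - t)) (f' := fun t => -ρ' (τ + τ₀ - t))
      (a := τ) (b := τ₀) hC
      (by
        intro t htI
        have hle : τ + τ₀ - t ≤ 0 := by
          have := htI.1; linarith
        have h1 : HasDerivAt (fun s : ℝ => τ + τ₀ - s) (-1) t :=
          (hasDerivAt_id t).const_sub (τ + τ₀)
        have := (hd _ hle).comp t h1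
        simpa [Function.comp_def] using this)
      (by
        intro t htI
        have hle : τ + τ₀ - t ≤ 0 := by
          have := htI.1; linarith
        simpa [abs_neg] using hineq _ hle)
      (by simpa using hposτ₀)
      τ₀ ⟨hτ, le_refl τ₀⟩
    simpa [hg0def] using hres
  -- bound for τ₀ ≤ τ ≤ 0
  have hb2 : ∀ τ, τ₀ ≤ τ → τ ≤ 0 → ((g0 + C * (τ - τ₀)) ^ 2)⁻¹ ≤ ρ τ := by
    intro τ hτ₁ hτ₂
    exact stmt15_helper (a := τ₀) (b := τ) hC
      (fun t ht => hd t (ht.2.trans hτ₂))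
      (fun t ht => hineq t (ht.2.trans hτ₂)) hposτ₀ τ ⟨hτ₁, le_refl τ⟩
  have hupos : ∀ τ ≤ τ₀, 0 < g0 + C * (τ₀ - τ) := fun τ hτ =>
    add_pos_of_pos_of_nonneg hg0 (mul_nonneg hC.le (by linarith))
  have hpos : ∀ τ ≤ (0:ℝ), 0 < ρ τ := by
    intro τ hτ
    rcases le_total τ τ₀ with h | h
    · exact lt_of_lt_of_le (by have := hupos τ h; positivity) (hb1 τ h)
    · have hu : 0 < g0 + C * (τ - τ₀) :=
        add_pos_of_pos_of_nonneg hg0 (mul_nonneg hC.le (by linarith))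
      exact lt_of_lt_of_le (by positivity) (hb2 τ h hτ)
  refine ⟨hpos, ⟨((g0 + C) ^ 2)⁻¹, by positivity, ?_⟩, ?_⟩
  · intro τ hτ
    have hτ0 : τ ≤ 0 := hτ.trans hτ₀
    have habs : |τ| = -τ := abs_of_nonpos hτ0
    have hup := hupos τ hτ
    have h1 : g0 + C * (τ₀ - τ) ≤ (g0 + C) * (1 + |τ|) := by rw [habs]; nlinarith
    have h2 : (g0 + C * (τ₀ - τ)) ^ 2 ≤ ((g0 + C) * (1 + |τ|)) ^ 2 := by nlinarith
    have h3 : (((g0 + C) * (1 + |τ|)) ^ 2)⁻¹ ≤ ((g0 + C * (τ₀ - τ)) ^ 2)⁻¹ :=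
      inv_anti₀ (by positivity) h2
    have h4 : (1 + |τ|) ^ (-(2:ℝ)) = ((1 + |τ|) ^ 2)⁻¹ := by
      rw [Real.rpow_neg (by positivity)]
      norm_num [Real.rpow_natCast]
    calc ((g0 + C) ^ 2)⁻¹ * (1 + |τ|) ^ (-(2:ℝ))
        = (((g0 + C) * (1 + |τ|)) ^ 2)⁻¹ := by rw [h4, mul_pow, mul_inv]
      _ ≤ ((g0 + C * (τ₀ - τ)) ^ 2)⁻¹ := h3
      _ ≤ ρ τ := hb1 τ hτ
  · intro H
    have hder : ∀ τ ≤ τ₀, HasDerivAt (fun s => Real.log (g0 + C * (τ₀ - s)))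
        (-C / (g0 + C * (τ₀ - τ))) τ := by
      intro τ hτ
      have h1 : HasDerivAt (fun s : ℝ => g0 + C * (τ₀ - s)) (-C) τ := by
        have := (((hasDerivAt_id τ).const_sub τ₀).const_mul C).const_add g0
        simpa using this
      exact h1.log (hupos τ hτ).ne'
    have hF : Tendsto (fun τ => ‖Real.log (g0 + C * (τ₀ - τ))‖) atBot atTop := by
      have h0' : Tendsto (fun τ : ℝ => -τ) atBot atTop := tendsto_neg_atBot_atTop
      have h1 : Tendsto (fun τ : ℝ => τ₀ + -τ) atBot atTop :=
        tendsto_atTop_add_const_left atBot τ₀ h0'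
      have h2 : Tendsto (fun τ : ℝ => C * (τ₀ + -τ)) atBot atTop :=
        h1.const_mul_atTop hC
      have h3 : Tendsto (fun τ : ℝ => g0 + C * (τ₀ - τ)) atBot atTop := by
        have := tendsto_atTop_add_const_left atBot g0 h2
        simpa [sub_eq_add_neg] using this
      have h4 := Real.tendsto_log_atTop.comp h3
      have h5 := tendsto_abs_atTop_atTop.comp h4
      simpa [Real.norm_eq_abs, Function.comp_def] using h5
    have hdF : ∀ᶠ τ in atBot,
        DifferentiableAt ℝ (fun s => Real.log (g0 + C * (τ₀ - s))) τ := by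
      filter_upwards [eventually_le_atBot τ₀] with τ hτ using (hder τ hτ).differentiableAt
    have hfg : deriv (fun s => Real.log (g0 + C * (τ₀ - s)))
        =O[atBot] (fun τ => Real.sqrt (ρ τ)) := by
      rw [Asymptotics.isBigO_iff]
      refine ⟨C, ?_⟩
      filter_upwards [eventually_le_atBot τ₀] with τ hτ
      have hu := hupos τ hτ
      rw [(hder τ hτ).deriv]
      have hsq : (g0 + C * (τ₀ - τ))⁻¹ ≤ Real.sqrt (ρ τ) := by
        have := Real.sqrt_le_sqrt (hb1 τ hτ)
        rwa [Real.sqrt_inv, Real.sqrt_sq hu.le] at this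
      have hnn' : 0 ≤ Real.sqrt (ρ τ) := Real.sqrt_nonneg _
      rw [Real.norm_eq_abs, Real.norm_eq_abs, abs_of_nonneg hnn', abs_div, abs_neg,
        abs_of_pos hC, abs_of_pos hu, div_eq_mul_inv]
      exact mul_le_mul_of_nonneg_left hsq hC.le
    exact not_integrableOn_of_tendsto_norm_atTop_of_deriv_isBigO_filter atBot
      (Iio_mem_atBot 0) hdF hF hfg H
end
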